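/- arXiv:2303.10878 — 10 statements merged into one kernel-verified Lean document; each statement's English description precedes it below -/
import Mathlib

section
/- Let U be a uniformly convex Banach space and let Q ⊆ U be a nonempty bounded closed convex set. Let T : Q → Q be uniformly local asymptotic nonexpansive with radius r > 0 and coefficients (β_n). If there exists q₀ ∈ Q such that the asymptotic radius of the sequence (Tⁿq₀) relative to Q is strictly less than r, then T has a fixed point in Q. -/
open Filter

/-- The asymptotic radius of a sequence `x` relative to a set `Q`:
`inf { limsup_n ‖x n − y‖ : y ∈ Q }`. -/
noncomputable def asymptoticRadius {U : Type*} [NormedAddCommGroup U]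
    (Q : Set U) (x : ℕ → U) : ℝ :=
  sInf ((fun y => limsup (fun n => ‖x n - y‖) atTop) '' Q)

theorem fixed_point_of_uniformly_local_asymptotic_nonexpansive
    {U : Type*} [NormedAddCommGroup U] [NormedSpace ℝ U]
    [CompleteSpace U] [UniformConvexSpace U]
    (Q : Set U) (hQne : Q.Nonempty) (hQbdd : Bornology.IsBounded Q)
    (hQcl : IsClosed Q) (hQconv : Convex ℝ Q)
    (T : U → U) (hT : Set.MapsTo T Q Q)
    (r : ℝ) (hr : 0 < r)
    (β : ℕ → ℝ) (hβpos : ∀ n, 0 < β n) (hβlim : Tendsto β atTop (nhds 1))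
    (hTloc : ∀ p ∈ Q, ∀ q ∈ Q, ‖p - q‖ < r →
      ∀ n : ℕ, ‖T^[n] p - T^[n] q‖ ≤ β n * ‖p - q‖)
    (q₀ : U) (hq₀ : q₀ ∈ Q)
    (hrad : asymptoticRadius Q (fun n => T^[n] q₀) < r) :
    ∃ w ∈ Q, T w = w := by
  classical
  obtain ⟨C, hC⟩ := isBounded_iff_forall_norm_le.mp hQbdd
  set x : ℕ → U := fun n => T^[n] q₀ with hxdef
  set φ : U → ℝ := fun y => limsup (fun n => ‖x n - y‖) atTop with hφdef
  set ρ := asymptoticRadius Q x with hρdef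
  have hxQ : ∀ n, x n ∈ Q := fun n => hT.iterate n hq₀
  have hbddA : ∀ y : U, IsBoundedUnder (· ≤ ·) atTop (fun n => ‖x n - y‖) := by
    intro y
    refine ⟨C + ‖y‖, eventually_map.2 (Eventually.of_forall fun n => ?_)⟩
    calc ‖x n - y‖ ≤ ‖x n‖ + ‖y‖ := norm_sub_le _ _
      _ ≤ C + ‖y‖ := by gcongr; exact hC _ (hxQ n)
  have hbdd0 : ∀ y : U, IsBoundedUnder (· ≥ ·) atTop (fun n => ‖x n - y‖) := fun y =>
    ⟨0, eventually_map.2 (Eventually.of_forall fun n => norm_nonneg _)⟩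
  have hcob : ∀ y : U, IsCoboundedUnder (· ≤ ·) atTop (fun n => ‖x n - y‖) := fun y =>
    (hbdd0 y).isCoboundedUnder_le
  have hφ0 : ∀ y : U, 0 ≤ φ y := fun y =>
    le_limsup_of_frequently_le (Frequently.of_forall fun n => norm_nonneg _) (hbddA y)
  have hρS : ρ = sInf (φ '' Q) := rfl
  have hSne : (φ '' Q).Nonempty := ⟨φ q₀, q₀, hq₀, rfl⟩
  have hSbdd : BddBelow (φ '' Q) := ⟨0, by rintro a ⟨y, -, rfl⟩; exact hφ0 y⟩
  have hρle : ∀ y ∈ Q, ρ ≤ φ y := fun y hy => by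
    rw [hρS]; exact csInf_le hSbdd ⟨y, hy, rfl⟩
  have hρ0 : 0 ≤ ρ := by
    rw [hρS]; exact le_csInf hSne (by rintro a ⟨y, -, rfl⟩; exact hφ0 y)
  have hmin : ∀ ε > (0:ℝ), ∃ y ∈ Q, φ y < ρ + ε := by
    intro ε hε
    have : sInf (φ '' Q) < ρ + ε := by rw [← hρS]; linarith
    obtain ⟨a, ⟨y, hyQ, rfl⟩, ha⟩ := exists_lt_of_csInf_lt hSne this
    exact ⟨y, hyQ, ha⟩
  have hev : ∀ y : U, ∀ b : ℝ, φ y < b → ∀ᶠ n in atTop, ‖x n - y‖ < b := fun y b h =>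
    eventually_lt_of_limsup_lt h (hbddA y)
  have hlimsup_le : ∀ y : U, ∀ b : ℝ, (∀ᶠ n in atTop, ‖x n - y‖ ≤ b) → φ y ≤ b :=
    fun y b h => limsup_le_of_le (hcob y) h
  -- Main uniform-convexity lemma
  have LemA : ∀ d > (0:ℝ), ∃ ε > (0:ℝ), ∀ y ∈ Q, ∀ y' ∈ Q,
      φ y < ρ + ε → φ y' < ρ + ε → ‖y - y'‖ < d := by
    intro d hd
    rcases hρ0.eq_or_lt with h0 | hρpos
    · refine ⟨d / 3, by positivity, ?_⟩
      intro y hy y' hy' h1 h2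
      obtain ⟨n, hn1, hn2⟩ := ((hev y _ h1).and (hev y' _ h2)).exists
      have h3 : ‖y - y'‖ ≤ ‖x n - y'‖ + ‖x n - y‖ := by
        have : y - y' = (x n - y') - (x n - y) := by abel
        rw [this]; exact norm_sub_le _ _
      rw [← h0] at hn1 hn2
      linarith
    · have hd' : (0:ℝ) < d / (ρ + 1) := by positivity
      obtain ⟨δ₀, hδ₀, huc⟩ := exists_forall_closed_ball_dist_add_le_two_sub U hd'
      set δ := min δ₀ 1 with hδdef
      have hδpos : 0 < δ := lt_min hδ₀ one_pos
      have hδ1 : δ ≤ 1 := min_le_right _ _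
      have huc' : ∀ a b : U, ‖a‖ ≤ 1 → ‖b‖ ≤ 1 → d / (ρ + 1) ≤ ‖a - b‖ →
          ‖a + b‖ ≤ 2 - δ := by
        intro a b ha hb hab
        refine (huc ha hb hab).trans ?_
        have h := min_le_left δ₀ 1
        simp only [hδdef]; linarith
      refine ⟨min (1/4) (ρ * δ / 8), lt_min (by norm_num) (by positivity), ?_⟩
      set ε := min (1/4 : ℝ) (ρ * δ / 8) with hεdef
      have hεpos : 0 < ε := lt_min (by norm_num) (by positivity)
      have hε1 : ε ≤ 1/4 := min_le_left _ _
      have hε2 : ε ≤ ρ * δ / 8 := min_le_right _ _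
      intro y hy y' hy' h1 h2
      by_contra hcon
      push_neg at hcon
      set R := ρ + 2 * ε with hRdef
      have hR : 0 < R := by positivity
      have hRle : R ≤ ρ + 1 := by simp only [hRdef]; linarith
      have key : ∀ a b : U, ‖a‖ ≤ R → ‖b‖ ≤ R → d ≤ ‖a - b‖ → ‖a + b‖ ≤ R * (2 - δ) := by
        intro a b ha hb hab
        have hsc : ∀ c : U, ‖c‖ ≤ R → ‖R⁻¹ • c‖ ≤ 1 := by
          intro c hc
          rw [norm_smul, norm_inv, Real.norm_eq_abs, abs_of_pos hR]
          have h4 : R⁻¹ * ‖c‖ ≤ R⁻¹ * R :=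
            mul_le_mul_of_nonneg_left hc (inv_nonneg.2 hR.le)
          rwa [inv_mul_cancel₀ hR.ne'] at h4
        have h2' : d / (ρ + 1) ≤ ‖R⁻¹ • a - R⁻¹ • b‖ := by
          rw [← smul_sub, norm_smul, norm_inv, Real.norm_eq_abs, abs_of_pos hR,
            ← div_eq_inv_mul]
          calc d / (ρ + 1) ≤ d / R := by
                apply div_le_div_of_nonneg_left hd.le hR hRle
            _ ≤ ‖a - b‖ / R := by gcongr
        have h3 := huc' _ _ (hsc a ha) (hsc b hb) h2'
        rw [← smul_add, norm_smul, norm_inv, Real.norm_eq_abs, abs_of_pos hR,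
          ← div_eq_inv_mul, div_le_iff₀ hR] at h3
        linarith [h3]
      set m := (2:ℝ)⁻¹ • y + (2:ℝ)⁻¹ • y' with hmdef
      have hmQ : m ∈ Q := hQconv hy hy' (by norm_num) (by norm_num) (by norm_num)
      have hevm : ∀ᶠ n in atTop, ‖x n - m‖ ≤ R * (2 - δ) / 2 := by
        filter_upwards [hev y _ h1, hev y' _ h2] with n hn1 hn2
        have ha : ‖x n - y‖ ≤ R := by simp only [hRdef]; linarith
        have hb : ‖x n - y'‖ ≤ R := by simp only [hRdef]; linarith
        have hab : d ≤ ‖(x n - y) - (x n - y')‖ := by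
          have : (x n - y) - (x n - y') = y' - y := by abel
          rw [this, norm_sub_rev]; exact hcon
        have h4 := key _ _ ha hb hab
        have h5 : x n - m = (2:ℝ)⁻¹ • ((x n - y) + (x n - y')) := by
          rw [hmdef]; module
        rw [h5, norm_smul, norm_inv, Real.norm_eq_abs]
        rw [abs_of_pos (by norm_num : (0:ℝ) < 2)]
        calc (2:ℝ)⁻¹ * ‖(x n - y) + (x n - y')‖ ≤ (2:ℝ)⁻¹ * (R * (2 - δ)) := by
              apply mul_le_mul_of_nonneg_left h4; norm_num
          _ = R * (2 - δ) / 2 := by ring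
      have h6 : ρ ≤ R * (2 - δ) / 2 := (hρle m hmQ).trans (hlimsup_le m _ hevm)
      have : R * (2 - δ) / 2 < ρ := by
        rw [hRdef]
        nlinarith [hεpos, hδpos, hρpos, hε2, hδ1]
      linarith
  -- minimizing sequence
  have hseq : ∀ k : ℕ, ∃ w, w ∈ Q ∧ φ w < ρ + 1 / (k + 1) := by
    intro k
    obtain ⟨w, h1, h2⟩ := hmin (1 / (k + 1)) (by positivity)
    exact ⟨w, h1, h2⟩
  choose y hyQ hyφ using hseq
  have hcauchy : CauchySeq y := by
    rw [Metric.cauchySeq_iff]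
    intro d hd
    obtain ⟨ε, hε, hA⟩ := LemA d hd
    obtain ⟨N, hN⟩ := exists_nat_one_div_lt hε
    refine ⟨N, fun a ha b hb => ?_⟩
    rw [dist_eq_norm]
    have hsmall : ∀ k : ℕ, N ≤ k → φ (y k) < ρ + ε := by
      intro k hk
      refine (hyφ k).trans_le ?_
      have : 1 / ((k:ℝ) + 1) ≤ 1 / ((N:ℝ) + 1) := by
        apply one_div_le_one_div_of_le (by positivity)
        exact_mod_cast Nat.succ_le_succ hk
      linarith [hN]
    exact hA _ (hyQ a) _ (hyQ b) (hsmall a ha) (hsmall b hb)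
  obtain ⟨z, hz⟩ := cauchySeq_tendsto_of_complete hcauchy
  have hzQ : z ∈ Q := hQcl.mem_of_tendsto hz (Eventually.of_forall hyQ)
  have hφz : φ z = ρ := by
    refine le_antisymm ?_ (hρle z hzQ)
    refine le_of_forall_pos_le_add ?_
    intro ε hε
    obtain ⟨N₁, hN₁⟩ := Metric.tendsto_atTop.mp hz (ε / 2) (by positivity)
    obtain ⟨N₂, hN₂⟩ := exists_nat_one_div_lt (show (0:ℝ) < ε / 2 by positivity)
    set k := max N₁ N₂ with hkdef
    have hk1 : dist (y k) z < ε / 2 := hN₁ k (le_max_left _ _)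
    have hk2 : (1:ℝ) / (k + 1) < ε / 2 := by
      refine lt_of_le_of_lt ?_ hN₂
      apply one_div_le_one_div_of_le (by positivity)
      exact_mod_cast Nat.succ_le_succ (le_max_right _ _)
    apply hlimsup_le
    filter_upwards [hev (y k) _ (hyφ k)] with n hn
    have h3 : ‖x n - z‖ ≤ ‖x n - y k‖ + ‖y k - z‖ := by
      have : x n - z = (x n - y k) + (y k - z) := by abel
      rw [this]; exact norm_add_le _ _
    rw [dist_eq_norm] at hk1
    linarith
  -- key iterate bound
  have hkey : ∀ ε' > (0:ℝ), ∀ mm : ℕ, φ (T^[mm] z) ≤ β mm * (ρ + ε') := by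
    intro ε' hε' mm
    have hφzlt : φ z < min r (ρ + ε') := by
      rw [hφz]; exact lt_min hrad (by linarith)
    obtain ⟨N, hN⟩ := eventually_atTop.mp (hev z _ hφzlt)
    apply hlimsup_le
    rw [eventually_atTop]
    refine ⟨N + mm, fun n hn => ?_⟩
    have hxe : x n = T^[mm] (x (n - mm)) := by
      rw [hxdef]
      simp only [← Function.iterate_add_apply]
      congr 1
      omega
    have hlt := hN (n - mm) (by omega)
    have hlt1 : ‖x (n - mm) - z‖ < r := hlt.trans_le (min_le_left _ _)
    have hlt2 : ‖x (n - mm) - z‖ ≤ ρ + ε' := (hlt.trans_le (min_le_right _ _)).le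
    rw [hxe]
    calc ‖T^[mm] (x (n - mm)) - T^[mm] z‖ ≤ β mm * ‖x (n - mm) - z‖ :=
          hTloc _ (hxQ _) _ hzQ hlt1 mm
      _ ≤ β mm * (ρ + ε') := mul_le_mul_of_nonneg_left hlt2 (hβpos mm).le
  -- T^[m] z → z
  have hconv : Tendsto (fun mm => T^[mm] z) atTop (nhds z) := by
    rw [Metric.tendsto_atTop]
    intro d hd
    obtain ⟨ε, hε, hA⟩ := LemA d hd
    have hβ : ∀ᶠ mm in atTop, β mm * (ρ + ε / 2) < ρ + ε := by
      have h1 : Tendsto (fun mm => β mm * (ρ + ε / 2)) atTop (nhds (1 * (ρ + ε / 2))) :=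
        hβlim.mul_const _
      rw [one_mul] at h1
      exact h1.eventually_lt_const (by linarith)
    obtain ⟨N, hN⟩ := eventually_atTop.mp hβ
    refine ⟨N, fun mm hmm => ?_⟩
    rw [dist_eq_norm]
    refine hA _ (hT.iterate mm hzQ) _ hzQ ?_ ?_
    · exact lt_of_le_of_lt (hkey (ε / 2) (by positivity) mm) (hN mm hmm)
    · rw [hφz]; linarith
  -- conclude
  have hnorm : Tendsto (fun mm => ‖T^[mm] z - z‖) atTop (nhds 0) := by
    rw [← tendsto_iff_norm_sub_tendsto_zero]
    exact hconv
  have h1 : Tendsto (fun mm => T^[mm + 1] z) atTop (nhds z) :=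
    hconv.comp (tendsto_add_atTop_nat 1)
  have h2 : Tendsto (fun mm => T^[mm + 1] z) atTop (nhds (T z)) := by
    rw [tendsto_iff_norm_sub_tendsto_zero]
    have hev' : ∀ᶠ mm in atTop, ‖T^[mm + 1] z - T z‖ ≤ β 1 * ‖T^[mm] z - z‖ := by
      filter_upwards [hnorm.eventually_lt_const hr] with mm hm
      have h3 := hTloc _ (hT.iterate mm hzQ) _ hzQ hm 1
      simpa [Function.iterate_succ_apply'] using h3
    have hg : Tendsto (fun mm => β 1 * ‖T^[mm] z - z‖) atTop (nhds 0) := by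
      simpa using hnorm.const_mul (β 1)
    exact squeeze_zero' (Eventually.of_forall fun mm => norm_nonneg _) hev' hg
  exact ⟨z, hzQ, tendsto_nhds_unique h2 h1⟩
end

section
/- Let U be a uniformly convex Banach space and let Q ⊆ U be a nonempty bounded closed convex set. Let T : Q → Q be a map such that there are functions α_n : Q → (0, ∞) with α_n(q) → 1 as n → ∞ for each q ∈ Q (pointwise on Q), and such that for all p, q ∈ Q with ‖p − q‖ < r (r > 0 fixed) and every n ∈ ℕ, ‖Tⁿp − Tⁿq‖ ≤ α_n(q) ‖p − q‖. If there exists q₀ ∈ Q such that the asymptotic radius of the sequence (Tⁿq₀) relative to Q is strictly less than r, then T has a fixed point in Q. -/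
open Filter

-- scaled uniform convexity helper
lemma aux_uc {U : Type*} [NormedAddCommGroup U] [NormedSpace ℝ U] [UniformConvexSpace U]
    {ε C : ℝ} (hε : 0 < ε) (hC : 0 < C) :
    ∃ δ : ℝ, 0 < δ ∧ δ ≤ 1 ∧ ∀ s : ℝ, 0 < s → s ≤ C → ∀ a b : U,
      ‖a‖ ≤ s → ‖b‖ ≤ s → ε ≤ ‖a - b‖ → ‖a + b‖ ≤ (2 - δ) * s := by
  obtain ⟨δ, hδ, h⟩ := exists_forall_closed_ball_dist_add_le_two_sub U (div_pos hε hC)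
  refine ⟨min δ 1, lt_min hδ one_pos, min_le_right _ _, fun s hs hsC a b ha hb hab => ?_⟩
  have hs' : (0:ℝ) < s⁻¹ := inv_pos.2 hs
  have h1 : ‖s⁻¹ • a‖ ≤ 1 := by
    rw [norm_smul, Real.norm_eq_abs, abs_of_pos hs']
    rw [inv_mul_le_iff₀ hs]; linarith
  have h2 : ‖s⁻¹ • b‖ ≤ 1 := by
    rw [norm_smul, Real.norm_eq_abs, abs_of_pos hs']
    rw [inv_mul_le_iff₀ hs]; linarith
  have h3 : ε / C ≤ ‖s⁻¹ • a - s⁻¹ • b‖ := by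
    rw [← smul_sub, norm_smul, Real.norm_eq_abs, abs_of_pos hs']
    calc ε / C ≤ ε / s := by gcongr
      _ ≤ ‖a - b‖ / s := by gcongr
      _ = s⁻¹ * ‖a - b‖ := by rw [div_eq_inv_mul]
  have := h h1 h2 h3
  rw [← smul_add, norm_smul, Real.norm_eq_abs, abs_of_pos hs', inv_mul_le_iff₀ hs] at this
  calc ‖a + b‖ ≤ (2 - δ) * s := by linarith [this]
    _ ≤ (2 - min δ 1) * s := by
        apply mul_le_mul_of_nonneg_right _ hs.le
        have := min_le_left δ 1; linarith

theorem fixed_point_of_uniformly_local_pointwise_asymptotic_nonexpansive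
    {U : Type*} [NormedAddCommGroup U] [NormedSpace ℝ U]
    [CompleteSpace U] [UniformConvexSpace U]
    (Q : Set U) (hQne : Q.Nonempty) (hQbdd : Bornology.IsBounded Q)
    (hQcl : IsClosed Q) (hQconv : Convex ℝ Q)
    (T : U → U) (hT : Set.MapsTo T Q Q)
    (r : ℝ) (hr : 0 < r)
    (α : ℕ → U → ℝ) (hαpos : ∀ n, ∀ q ∈ Q, 0 < α n q)
    (hαlim : ∀ q ∈ Q, Tendsto (fun n => α n q) atTop (nhds 1))
    (hTloc : ∀ p ∈ Q, ∀ q ∈ Q, ‖p - q‖ < r →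
      ∀ n : ℕ, ‖T^[n] p - T^[n] q‖ ≤ α n q * ‖p - q‖)
    (q₀ : U) (hq₀ : q₀ ∈ Q)
    (hrad : asymptoticRadius Q (fun n => T^[n] q₀) < r) :
    ∃ w ∈ Q, T w = w := by
  set x : ℕ → U := fun n => T^[n] q₀ with hxdef
  set φ : U → ℝ := fun y => limsup (fun n => ‖x n - y‖) atTop with hφdef
  set R : ℝ := asymptoticRadius Q x with hRdef
  have hRdef2 : R = sInf (φ '' Q) := rfl
  -- membership of iterates
  have hx : ∀ n, x n ∈ Q := fun n => hT.iterate n hq₀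
  -- bound on Q
  obtain ⟨M, hM⟩ := Metric.isBounded_iff.1 hQbdd
  -- basic limsup facts
  have hb : ∀ y ∈ Q, IsBoundedUnder (· ≤ ·) atTop (fun n => ‖x n - y‖) := by
    intro y hy
    exact isBoundedUnder_of ⟨M, fun n => by
      rw [← dist_eq_norm]; exact hM (hx n) hy⟩
  have hcb : ∀ y : U, IsCoboundedUnder (· ≤ ·) atTop (fun n => ‖x n - y‖) := by
    intro y
    exact (isBoundedUnder_of ⟨0, fun n => norm_nonneg _⟩ :
      IsBoundedUnder (· ≥ ·) atTop (fun n => ‖x n - y‖)).isCoboundedUnder_le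
  have hφ0 : ∀ y ∈ Q, 0 ≤ φ y := by
    intro y hy
    exact le_limsup_of_frequently_le (Frequently.of_forall fun n => norm_nonneg _) (hb y hy)
  have hφQne : (φ '' Q).Nonempty := hQne.image φ
  have hφbdd : BddBelow (φ '' Q) := by
    refine ⟨0, fun a ha => ?_⟩
    obtain ⟨y, hy, rfl⟩ := ha
    exact hφ0 y hy
  have hRle : ∀ y ∈ Q, R ≤ φ y := by
    intro y hy
    rw [hRdef2]
    exact csInf_le hφbdd ⟨y, hy, rfl⟩
  have hR0 : 0 ≤ R := by
    rw [hRdef2]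
    exact le_csInf hφQne (fun a ⟨y, hy, h⟩ => h ▸ hφ0 y hy)
  -- Lipschitz-type inequality for φ
  have lip : ∀ y ∈ Q, ∀ z : U, φ z ≤ φ y + ‖y - z‖ := by
    intro y hy z
    refine le_of_forall_pos_le_add fun η hη => ?_
    have hev : ∀ᶠ n in atTop, ‖x n - y‖ < φ y + η :=
      eventually_lt_of_limsup_lt (by linarith) (hb y hy)
    refine limsup_le_of_le (hcb z) ?_
    filter_upwards [hev] with n hn
    calc ‖x n - z‖ ≤ ‖x n - y‖ + ‖y - z‖ := norm_sub_le_norm_sub_add_norm_sub _ _ _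
      _ ≤ φ y + ‖y - z‖ + η := by linarith
  -- triangle bound
  have tri : ∀ y ∈ Q, ∀ z ∈ Q, ‖y - z‖ ≤ φ y + φ z := by
    intro y hy z hz
    refine le_of_forall_pos_le_add fun η hη => ?_
    have h1 : ∀ᶠ n in atTop, ‖x n - y‖ < φ y + η / 2 :=
      eventually_lt_of_limsup_lt (by linarith) (hb y hy)
    have h2 : ∀ᶠ n in atTop, ‖x n - z‖ < φ z + η / 2 :=
      eventually_lt_of_limsup_lt (by linarith) (hb z hz)
    obtain ⟨n, hn1, hn2⟩ := (h1.and h2).exists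
    calc ‖y - z‖ ≤ ‖y - x n‖ + ‖x n - z‖ := norm_sub_le_norm_sub_add_norm_sub _ _ _
      _ = ‖x n - y‖ + ‖x n - z‖ := by rw [norm_sub_rev]
      _ ≤ φ y + φ z + η := by linarith
  -- the key uniform-convexity claim
  have key : ∀ ε : ℝ, 0 < ε → ∃ δ : ℝ, 0 < δ ∧
      ∀ y ∈ Q, ∀ z ∈ Q, φ y ≤ R + δ → φ z ≤ R + δ → ‖y - z‖ ≤ ε := by
    intro ε hε
    rcases eq_or_lt_of_le hR0 with hR | hR
    · refine ⟨ε / 4, by linarith, fun y hy z hz h1 h2 => ?_⟩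
      have := tri y hy z hz
      rw [← hR] at h1 h2
      linarith
    · obtain ⟨δ₀, hδ₀, hδ₀1, huc⟩ := aux_uc (U := U) hε (show (0:ℝ) < R + 2 by linarith)
      refine ⟨min 1 (δ₀ * R / 8), lt_min one_pos (by positivity), fun y hy z hz h1 h2 => ?_⟩
      set δ := min 1 (δ₀ * R / 8) with hδdef
      have hδpos : 0 < δ := lt_min one_pos (by positivity)
      have hδ1 : δ ≤ 1 := min_le_left _ _
      have hδ8 : δ ≤ δ₀ * R / 8 := min_le_right _ _
      by_contra hcon
      push_neg at hcon
      have hm : (1/2 : ℝ) • y + (1/2 : ℝ) • z ∈ Q :=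
        hQconv hy hz (by norm_num) (by norm_num) (by norm_num)
      set m := (1/2 : ℝ) • y + (1/2 : ℝ) • z with hmdef
      have ev1 : ∀ᶠ n in atTop, ‖x n - y‖ < R + 2 * δ :=
        eventually_lt_of_limsup_lt (by linarith) (hb y hy)
      have ev2 : ∀ᶠ n in atTop, ‖x n - z‖ < R + 2 * δ :=
        eventually_lt_of_limsup_lt (by linarith) (hb z hz)
      have hφm : φ m ≤ (1 - δ₀ / 2) * (R + 2 * δ) := by
        refine limsup_le_of_le (hcb m) ?_
        filter_upwards [ev1, ev2] with n hn1 hn2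
        have hab : ε ≤ ‖(x n - y) - (x n - z)‖ := by
          have : (x n - y) - (x n - z) = z - y := by abel
          rw [this, norm_sub_rev]
          exact hcon.le
        have hs : (0:ℝ) < R + 2 * δ := by linarith
        have hsC : R + 2 * δ ≤ R + 2 := by linarith
        have := huc (R + 2 * δ) hs hsC (x n - y) (x n - z) hn1.le hn2.le hab
        have hxm : x n - m = (1/2 : ℝ) • ((x n - y) + (x n - z)) := by
          rw [hmdef]; module
        rw [hxm, norm_smul]
        rw [Real.norm_eq_abs]
        rw [abs_of_pos (by norm_num : (0:ℝ) < 1/2)]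
        nlinarith [this]
      have := hRle m hm
      nlinarith [hδ₀, hδpos, hR]
  -- minimizing sequence
  have hmin : ∀ k : ℕ, ∃ y ∈ Q, φ y < R + 1 / (k + 1) := by
    intro k
    have : R < R + 1 / (k + 1) := by
      have : (0:ℝ) < 1 / (k + 1) := by positivity
      linarith
    rw [hRdef2] at this
    obtain ⟨a, ⟨y, hy, rfl⟩, ha⟩ := exists_lt_of_csInf_lt hφQne this
    exact ⟨y, hy, ha⟩
  choose y hyQ hyφ using hmin
  have hcauchy : CauchySeq y := by
    rw [Metric.cauchySeq_iff]
    intro ε hε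
    obtain ⟨δ, hδ, hkey⟩ := key (ε / 2) (by linarith)
    obtain ⟨K, hK⟩ := exists_nat_gt (1 / δ)
    refine ⟨K, fun a ha b hb' => ?_⟩
    have hbound : ∀ c : ℕ, K ≤ c → φ (y c) ≤ R + δ := by
      intro c hc
      have h1 : (1 : ℝ) / (c + 1) ≤ 1 / (K + 1) := by
        apply one_div_le_one_div_of_le (by positivity)
        exact_mod_cast by omega
      have h2 : (1 : ℝ) / (K + 1) < δ := by
        rw [div_lt_iff₀ (by positivity)]
        rw [div_lt_iff₀ hδ] at hK
        nlinarith [hδ]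
      have := hyφ c
      linarith
    have := hkey (y a) (hyQ a) (y b) (hyQ b) (hbound a ha) (hbound b hb')
    rw [dist_eq_norm]
    linarith
  obtain ⟨w, hw⟩ := cauchySeq_tendsto_of_complete hcauchy
  have hwQ : w ∈ Q := hQcl.mem_of_tendsto hw (Eventually.of_forall hyQ)
  -- φ w = R
  have hnorm0 : Tendsto (fun k => ‖y k - w‖) atTop (nhds 0) :=
    tendsto_iff_norm_sub_tendsto_zero.mp hw
  have hφw_le : φ w ≤ R := by
    have hb2 : ∀ k : ℕ, φ w ≤ R + 1 / (k + 1) + ‖y k - w‖ := by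
      intro k
      have := lip (y k) (hyQ k) w
      have := hyφ k
      linarith
    have hlim : Tendsto (fun k : ℕ => R + 1 / (k + 1) + ‖y k - w‖) atTop
        (nhds (R + 0 + 0)) := by
      exact (tendsto_const_nhds.add tendsto_one_div_add_atTop_nhds_zero_nat).add hnorm0
    rw [add_zero, add_zero] at hlim
    exact ge_of_tendsto' hlim hb2
  have hφw : φ w = R := le_antisymm hφw_le (hRle w hwQ)
  -- eventually x n is within r of w
  have hev_r : ∀ᶠ n in atTop, ‖x n - w‖ < r := by
    apply eventually_lt_of_limsup_lt _ (hb w hwQ)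
    show φ w < r
    rw [hφw]; exact hrad
  -- iterate bound
  have hiter : ∀ k : ℕ, φ (T^[k] w) ≤ α k w * R := by
    intro k
    have hαk : 0 < α k w := hαpos k w hwQ
    refine le_of_forall_pos_le_add fun η hη => ?_
    have hδ'' : (0:ℝ) < η / α k w := by positivity
    have ev2 : ∀ᶠ n in atTop, ‖x n - w‖ < R + η / α k w :=
      eventually_lt_of_limsup_lt (show φ w < R + η / α k w by rw [hφw]; linarith) (hb w hwQ)
    obtain ⟨N, hN⟩ := eventually_atTop.1 (hev_r.and ev2)
    refine limsup_le_of_le (hcb _) ?_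
    rw [eventually_atTop]
    refine ⟨N + k, fun n hn => ?_⟩
    set mm := n - k with hmm
    have hmN : N ≤ mm := by omega
    have hkm : k + mm = n := by omega
    have hxn : x n = T^[k] (x mm) := by
      show T^[n] q₀ = T^[k] (T^[mm] q₀)
      rw [← Function.iterate_add_apply, hkm]
    obtain ⟨h1, h2⟩ := hN mm hmN
    calc ‖x n - T^[k] w‖ = ‖T^[k] (x mm) - T^[k] w‖ := by rw [hxn]
      _ ≤ α k w * ‖x mm - w‖ := hTloc (x mm) (hx mm) w hwQ h1 k
      _ ≤ α k w * (R + η / α k w) := by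
          apply mul_le_mul_of_nonneg_left h2.le hαk.le
      _ = α k w * R + η := by rw [mul_add, mul_div_cancel₀ _ hαk.ne']
  -- T^[k] w → w
  have hgw : Tendsto (fun k => T^[k] w) atTop (nhds w) := by
    rw [Metric.tendsto_atTop]
    intro ε hε
    obtain ⟨δ, hδ, hkey⟩ := key (ε / 2) (by linarith)
    have hαR : Tendsto (fun k => α k w * R) atTop (nhds R) := by
      have := (hαlim w hwQ).mul_const R
      rwa [one_mul] at this
    have hev : ∀ᶠ k in atTop, α k w * R < R + δ :=
      hαR.eventually_lt_const (by linarith)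
    obtain ⟨N, hN⟩ := eventually_atTop.1 hev
    refine ⟨N, fun k hk => ?_⟩
    have h1 : φ (T^[k] w) ≤ R + δ := (hiter k).trans (hN k hk).le
    have h2 : φ w ≤ R + δ := by rw [hφw]; linarith
    have := hkey (T^[k] w) (hT.iterate k hwQ) w hwQ h1 h2
    rw [dist_eq_norm]
    linarith
  -- conclude T w = w
  have hnorm0' : Tendsto (fun k => ‖T^[k] w - w‖) atTop (nhds 0) :=
    tendsto_iff_norm_sub_tendsto_zero.mp hgw
  have hevr' : ∀ᶠ k in atTop, ‖T^[k] w - w‖ < r :=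
    hnorm0'.eventually_lt_const hr
  have hTw : Tendsto (fun k => T^[k + 1] w) atTop (nhds (T w)) := by
    rw [tendsto_iff_norm_sub_tendsto_zero]
    apply squeeze_zero' (Eventually.of_forall fun k => norm_nonneg _)
      (g := fun k => α 1 w * ‖T^[k] w - w‖) _ _
    · filter_upwards [hevr'] with k hk
      have := hTloc (T^[k] w) (hT.iterate k hwQ) w hwQ hk 1
      simpa [Function.iterate_one, Function.iterate_succ_apply'] using this
    · have := hnorm0'.const_mul (α 1 w)
      rwa [mul_zero] at this
  have hTw' : Tendsto (fun k => T^[k + 1] w) atTop (nhds w) :=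
    (tendsto_add_atTop_iff_nat 1).2 hgw
  exact ⟨w, hwQ, tendsto_nhds_unique hTw hTw'⟩
end

section
/- Let Q be a nonempty subset of a normed linear space U and let T : Q → Q be uniformly local asymptotic nonexpansive with radius r > 0 and coefficients (β_n). Suppose (q_n) is a sequence in Q such that ‖Tq_n − q_n‖ → 0 as n → ∞. Then for each fixed m ∈ ℕ, ‖T^m q_n − q_n‖ → 0 as n → ∞. -/
open Filter

theorem iterate_approx_fixed_point_seq
    {U : Type*} [NormedAddCommGroup U] [NormedSpace ℝ U]
    (Q : Set U) (hQne : Q.Nonempty)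
    (T : U → U) (hT : Set.MapsTo T Q Q)
    (r : ℝ) (hr : 0 < r)
    (β : ℕ → ℝ) (hβpos : ∀ n, 0 < β n) (hβlim : Tendsto β atTop (nhds 1))
    (hTloc : ∀ p ∈ Q, ∀ q ∈ Q, ‖p - q‖ < r →
      ∀ n : ℕ, ‖T^[n] p - T^[n] q‖ ≤ β n * ‖p - q‖)
    (q : ℕ → U) (hq : ∀ n, q n ∈ Q)
    (hfix : Tendsto (fun n => ‖T (q n) - q n‖) atTop (nhds 0)) :
    ∀ m : ℕ, Tendsto (fun n => ‖T^[m] (q n) - q n‖) atTop (nhds 0) := by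
  intro m
  induction m with
  | zero => simpa using tendsto_const_nhds
  | succ m ih =>
    have hsmall : ∀ᶠ n in atTop, ‖T (q n) - q n‖ < r :=
      hfix.eventually (eventually_lt_nhds hr)
    have hbound : ∀ᶠ n in atTop,
        ‖T^[m+1] (q n) - q n‖ ≤ β m * ‖T (q n) - q n‖ + ‖T^[m] (q n) - q n‖ := by
      filter_upwards [hsmall] with n hn
      have h1 : ‖T^[m] (T (q n)) - T^[m] (q n)‖ ≤ β m * ‖T (q n) - q n‖ :=
        hTloc (T (q n)) (hT (hq n)) (q n) (hq n) hn m
      calc ‖T^[m+1] (q n) - q n‖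
          = ‖(T^[m] (T (q n)) - T^[m] (q n)) + (T^[m] (q n) - q n)‖ := by
            rw [Function.iterate_succ_apply]; congr 1; abel
        _ ≤ ‖T^[m] (T (q n)) - T^[m] (q n)‖ + ‖T^[m] (q n) - q n‖ := norm_add_le _ _
        _ ≤ β m * ‖T (q n) - q n‖ + ‖T^[m] (q n) - q n‖ := by linarith
    have hlim : Tendsto (fun n => β m * ‖T (q n) - q n‖ + ‖T^[m] (q n) - q n‖)
        atTop (nhds 0) := by
      have := (hfix.const_mul (β m)).add ih
      simpa using this
    have hnonneg : ∀ n, 0 ≤ ‖T^[m+1] (q n) - q n‖ := fun n => norm_nonneg _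
    exact squeeze_zero' (Eventually.of_forall hnonneg) hbound hlim
end

section
/- Let Q be a nonempty subset of a normed linear space, let T : Q → Q be uniformly local asymptotic nonexpansive with radius r > 0 and coefficients (β_n), and let q ∈ Q satisfy ‖Tq − q‖ < r. Then for every integer m ≥ 1, ‖T^m q − q‖ ≤ (1 + Σ_{j=1}^{m−1} β_j) ‖Tq − q‖. -/
open Filter

theorem iterate_dist_le_sum_coeffs
    {U : Type*} [NormedAddCommGroup U] [NormedSpace ℝ U]
    (Q : Set U) (hQne : Q.Nonempty)
    (T : U → U) (hT : Set.MapsTo T Q Q)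
    (r : ℝ) (hr : 0 < r)
    (β : ℕ → ℝ) (hβpos : ∀ n, 0 < β n) (hβlim : Tendsto β atTop (nhds 1))
    (hTloc : ∀ p ∈ Q, ∀ q ∈ Q, ‖p - q‖ < r →
      ∀ n : ℕ, ‖T^[n] p - T^[n] q‖ ≤ β n * ‖p - q‖)
    (q : U) (hq : q ∈ Q) (hqr : ‖T q - q‖ < r) :
    ∀ m : ℕ, 1 ≤ m →
      ‖T^[m] q - q‖ ≤ (1 + ∑ j ∈ Finset.Icc 1 (m - 1), β j) * ‖T q - q‖ := by
  intro m hm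
  induction m with
  | zero => omega
  | succ k ih =>
    rcases Nat.eq_or_lt_of_le hm with h1 | h1
    · -- k + 1 = 1, i.e. k = 0
      have hk : k = 0 := by omega
      subst hk
      simp
    · -- k ≥ 1
      have hk : 1 ≤ k := by omega
      have hstep : ‖T^[k+1] q - T^[k] q‖ ≤ β k * ‖T q - q‖ := by
        have := hTloc (T q) (hT hq) q hq hqr k
        simpa [Function.iterate_succ_apply] using this
      have ihk := ih hk
      have htri : ‖T^[k+1] q - q‖ ≤ ‖T^[k+1] q - T^[k] q‖ + ‖T^[k] q - q‖ :=
        norm_sub_le_norm_sub_add_norm_sub _ _ _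
      have hsum : ∑ j ∈ Finset.Icc 1 (k + 1 - 1), β j
          = β k + ∑ j ∈ Finset.Icc 1 (k - 1), β j := by
        have h1 : k + 1 - 1 = k := by omega
        have h2 : k - 1 + 1 = k := by omega
        rw [h1, ← h2, Finset.sum_Icc_succ_top (by omega), h2]
        ring
      calc ‖T^[k+1] q - q‖ ≤ ‖T^[k+1] q - T^[k] q‖ + ‖T^[k] q - q‖ := htri
        _ ≤ β k * ‖T q - q‖ + (1 + ∑ j ∈ Finset.Icc 1 (k - 1), β j) * ‖T q - q‖ :=
            add_le_add hstep ihk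
        _ = (1 + ∑ j ∈ Finset.Icc 1 (k + 1 - 1), β j) * ‖T q - q‖ := by
            rw [hsum]; ring
end

section
/- Let Q be a nonempty subset of a normed linear space, let T : Q → Q be uniformly local asymptotic nonexpansive with radius r > 0 and coefficients (β_n), and let (q_n) be a bounded sequence in Q with ‖q_n − Tq_n‖ → 0. Then for every q ∈ Q and every m ∈ ℕ, limsup_{n→∞} ‖T^m q_n − q‖ = limsup_{n→∞} ‖q_n − q‖. -/
open Filter

private lemma limsup_le_of_sub_tendsto_zero (u v : ℕ → ℝ)
    (h : Tendsto (fun n => u n - v n) atTop (nhds 0))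
    (hu : IsBoundedUnder (· ≥ ·) atTop u)
    (hv : IsBoundedUnder (· ≤ ·) atTop v)
    (hvc : IsCoboundedUnder (· ≤ ·) atTop v) :
    limsup u atTop ≤ limsup v atTop := by
  refine le_of_forall_pos_le_add fun ε hε => ?_
  have h1 : ∀ᶠ n in atTop, u n ≤ v n + ε := by
    filter_upwards [h.eventually (eventually_lt_nhds hε)] with n hn
    linarith
  have hvε : IsBoundedUnder (· ≤ ·) atTop (fun n => v n + ε) := by
    obtain ⟨b, hb⟩ := hv
    rw [eventually_map] at hb
    exact ⟨b + ε, eventually_map.mpr <| hb.mono fun n hn => by dsimp; linarith⟩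
  calc limsup u atTop ≤ limsup (fun n => v n + ε) atTop :=
        limsup_le_limsup h1 hu.isCoboundedUnder_le hvε
    _ = limsup v atTop + ε := limsup_add_const atTop v ε hv hvc

theorem limsup_iterate_eq_limsup
    {U : Type*} [NormedAddCommGroup U] [NormedSpace ℝ U]
    (Q : Set U) (hQne : Q.Nonempty)
    (T : U → U) (hT : Set.MapsTo T Q Q)
    (r : ℝ) (hr : 0 < r)
    (β : ℕ → ℝ) (hβpos : ∀ n, 0 < β n) (hβlim : Tendsto β atTop (nhds 1))
    (hTloc : ∀ p ∈ Q, ∀ q ∈ Q, ‖p - q‖ < r →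
      ∀ n : ℕ, ‖T^[n] p - T^[n] q‖ ≤ β n * ‖p - q‖)
    (q : ℕ → U) (hqQ : ∀ n, q n ∈ Q)
    (hqbdd : Bornology.IsBounded (Set.range q))
    (hfix : Tendsto (fun n => ‖q n - T (q n)‖) atTop (nhds 0)) :
    ∀ x ∈ Q, ∀ m : ℕ,
      limsup (fun n => ‖T^[m] (q n) - x‖) atTop = limsup (fun n => ‖q n - x‖) atTop := by
  -- `‖T (q n) - q n‖ → 0`
  have hfix' : Tendsto (fun n => ‖T (q n) - q n‖) atTop (nhds 0) := by
    simpa [norm_sub_rev] using hfix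
  -- eventually `‖T (q n) - q n‖ < r`
  have hev : ∀ᶠ n in atTop, ‖T (q n) - q n‖ < r := hfix'.eventually (eventually_lt_nhds hr)
  -- Key: for every m, `‖T^[m] (q n) - q n‖ → 0`
  have hA : ∀ m : ℕ, Tendsto (fun n => ‖T^[m] (q n) - q n‖) atTop (nhds 0) := by
    intro m
    induction m with
    | zero => simpa using tendsto_const_nhds
    | succ m ih =>
      apply squeeze_zero' (Eventually.of_forall fun n => norm_nonneg _)
        (g := fun n => β m * ‖T (q n) - q n‖ + ‖T^[m] (q n) - q n‖)
      · filter_upwards [hev] with n hn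
        have h1 := hTloc (T (q n)) (hT (hqQ n)) (q n) (hqQ n) hn m
        calc ‖T^[m + 1] (q n) - q n‖
            = ‖(T^[m] (T (q n)) - T^[m] (q n)) + (T^[m] (q n) - q n)‖ := by
              rw [Function.iterate_succ_apply]; congr 1; abel
          _ ≤ ‖T^[m] (T (q n)) - T^[m] (q n)‖ + ‖T^[m] (q n) - q n‖ := norm_add_le _ _
          _ ≤ β m * ‖T (q n) - q n‖ + ‖T^[m] (q n) - q n‖ := by linarith
      · simpa using ((hfix'.const_mul (β m)).add ih)
  -- bound on `q`
  obtain ⟨C, hC⟩ := hqbdd.exists_norm_le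
  intro x hx m
  set u : ℕ → ℝ := fun n => ‖T^[m] (q n) - x‖ with hu_def
  set v : ℕ → ℝ := fun n => ‖q n - x‖ with hv_def
  have hsub : Tendsto (fun n => u n - v n) atTop (nhds 0) := by
    refine squeeze_zero_norm (fun n => ?_) (hA m)
    have : (T^[m] (q n) - x) - (q n - x) = T^[m] (q n) - q n := by abel
    calc ‖u n - v n‖ = |‖T^[m] (q n) - x‖ - ‖q n - x‖| := rfl
      _ ≤ ‖(T^[m] (q n) - x) - (q n - x)‖ := abs_norm_sub_norm_le _ _
      _ = ‖T^[m] (q n) - q n‖ := by rw [this]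
  have hsub' : Tendsto (fun n => v n - u n) atTop (nhds 0) := by
    simpa using hsub.neg
  have hv_ub : IsBoundedUnder (· ≤ ·) atTop v :=
    ⟨C + ‖x‖, eventually_map.mpr <| Eventually.of_forall fun n =>
      (norm_sub_le _ _).trans (by have := hC (q n) ⟨n, rfl⟩; linarith)⟩
  have hv_lb : IsBoundedUnder (· ≥ ·) atTop v :=
    ⟨0, eventually_map.mpr <| Eventually.of_forall fun n => norm_nonneg _⟩
  have hu_lb : IsBoundedUnder (· ≥ ·) atTop u :=
    ⟨0, eventually_map.mpr <| Eventually.of_forall fun n => norm_nonneg _⟩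
  have hu_ub : IsBoundedUnder (· ≤ ·) atTop u := by
    refine ⟨C + ‖x‖ + 1, eventually_map.mpr ?_⟩
    filter_upwards [hsub.eventually (eventually_lt_nhds (by norm_num : (0:ℝ) < 1))] with n hn
    have hv : v n ≤ C + ‖x‖ :=
      (norm_sub_le _ _).trans (by have := hC (q n) ⟨n, rfl⟩; linarith)
    linarith
  exact le_antisymm
    (limsup_le_of_sub_tendsto_zero u v hsub hu_lb hv_ub hv_lb.isCoboundedUnder_le)
    (limsup_le_of_sub_tendsto_zero v u hsub' hv_lb hu_ub hu_lb.isCoboundedUnder_le)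
end

section
/- Let U be a uniformly convex Banach space, Q ⊆ U a nonempty bounded closed convex set, and T : Q → Q uniformly local asymptotic nonexpansive with radius r > 0 and coefficients (β_n). Suppose there exists q₀ ∈ Q such that the asymptotic radius of (Tⁿq₀) relative to Q is strictly less than r, and let w ∈ Q be a minimizer over Q of the function f(q) = limsup_{n→∞} ‖Tⁿq₀ − q‖. Then the sequence (Tⁿw) is a Cauchy sequence. -/
open Filter

theorem iterate_cauchySeq_of_minimizer
    {U : Type*} [NormedAddCommGroup U] [NormedSpace ℝ U]
    [CompleteSpace U] [UniformConvexSpace U]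
    (Q : Set U) (hQne : Q.Nonempty) (hQbdd : Bornology.IsBounded Q)
    (hQcl : IsClosed Q) (hQconv : Convex ℝ Q)
    (T : U → U) (hT : Set.MapsTo T Q Q)
    (r : ℝ) (hr : 0 < r)
    (β : ℕ → ℝ) (hβpos : ∀ n, 0 < β n) (hβlim : Tendsto β atTop (nhds 1))
    (hTloc : ∀ p ∈ Q, ∀ q ∈ Q, ‖p - q‖ < r →
      ∀ n : ℕ, ‖T^[n] p - T^[n] q‖ ≤ β n * ‖p - q‖)
    (q₀ : U) (hq₀ : q₀ ∈ Q)
    (hrad : asymptoticRadius Q (fun n => T^[n] q₀) < r)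
    (w : U) (hw : w ∈ Q)
    (hwmin : ∀ q ∈ Q, limsup (fun n => ‖T^[n] q₀ - w‖) atTop ≤
      limsup (fun n => ‖T^[n] q₀ - q‖) atTop) :
    CauchySeq (fun n => T^[n] w) := by
  have xQ : ∀ n, T^[n] q₀ ∈ Q := fun n => hT.iterate n hq₀
  have wQ : ∀ m, T^[m] w ∈ Q := fun m => hT.iterate m hw
  obtain ⟨C, hC⟩ := hQbdd.subset_closedBall 0
  have hbound : ∀ y ∈ Q, ∀ z ∈ Q, ‖y - z‖ ≤ C + C := by
    intro y hy z hz
    have hy' := hC hy; have hz' := hC hz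
    simp only [Metric.mem_closedBall, dist_zero_right] at hy' hz'
    calc ‖y - z‖ ≤ ‖y‖ + ‖z‖ := norm_sub_le _ _
      _ ≤ C + C := add_le_add hy' hz'
  have hbdd : ∀ y ∈ Q, IsBoundedUnder (· ≤ ·) atTop (fun n => ‖T^[n] q₀ - y‖) :=
    fun y hy => isBoundedUnder_of ⟨C + C, fun n => hbound _ (xQ n) y hy⟩
  have hcob : ∀ g : ℕ → ℝ, (∀ n, (0:ℝ) ≤ g n) → IsCoboundedUnder (· ≤ ·) atTop g :=
    fun g hg =>
      (isBoundedUnder_of (r := (· ≥ ·)) ⟨0, fun n => hg n⟩).isCoboundedUnder_le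
  set ρ := limsup (fun n => ‖T^[n] q₀ - w‖) atTop with hρdef
  have hρ0 : 0 ≤ ρ :=
    le_limsup_of_frequently_le (Frequently.of_forall fun n => norm_nonneg _) (hbdd w hw)
  have hρr : ρ < r := by
    have h1 : ρ ≤ asymptoticRadius Q (fun n => T^[n] q₀) := by
      unfold asymptoticRadius
      apply le_csInf ⟨_, Set.mem_image_of_mem _ hw⟩
      rintro b ⟨y, hy, rfl⟩
      exact hwmin y hy
    exact lt_of_le_of_lt h1 hrad
  -- Key step: for every m and every c > ρ, limsup_n ‖Tⁿq₀ - Tᵐw‖ ≤ β m * c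
  have stepA : ∀ m : ℕ, ∀ c : ℝ, ρ < c →
      limsup (fun n => ‖T^[n] q₀ - T^[m] w‖) atTop ≤ β m * c := by
    intro m c hc
    have h1 : ∀ᶠ n in atTop, ‖T^[n] q₀ - w‖ < c := eventually_lt_of_limsup_lt hc (hbdd w hw)
    have h2 : ∀ᶠ n in atTop, ‖T^[n] q₀ - w‖ < r := eventually_lt_of_limsup_lt hρr (hbdd w hw)
    have key : ∀ᶠ n in atTop, ‖T^[n + m] q₀ - T^[m] w‖ ≤ β m * c := by
      filter_upwards [h1, h2] with n h1n h2n
      have hle := hTloc (T^[n] q₀) (xQ n) w hw h2n m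
      have hxnm : T^[m] (T^[n] q₀) = T^[n + m] q₀ := by
        rw [add_comm, Function.iterate_add_apply]
      rw [hxnm] at hle
      calc ‖T^[n + m] q₀ - T^[m] w‖ ≤ β m * ‖T^[n] q₀ - w‖ := hle
        _ ≤ β m * c := by
          have hb := (hβpos m).le
          nlinarith [h1n.le]
    have h3 := limsup_le_of_le (hcob _ fun n => norm_nonneg _) key
    rwa [limsup_nat_add (fun n => ‖T^[n] q₀ - T^[m] w‖) m] at h3
  rcases eq_or_lt_of_le hρ0 with hρeq | hρpos
  · -- Case ρ = 0 : the iterate sequence of w is constant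
    have hconst : ∀ m, Tendsto (fun n => T^[n] q₀) atTop (nhds (T^[m] w)) := by
      intro m
      have hge : (0:ℝ) ≤ liminf (fun n => ‖T^[n] q₀ - T^[m] w‖) atTop := by
        apply le_liminf_of_le
        · exact (hbdd _ (wQ m)).isCoboundedUnder_ge
        · exact Eventually.of_forall fun n => norm_nonneg _
      have hle : limsup (fun n => ‖T^[n] q₀ - T^[m] w‖) atTop ≤ 0 := by
        by_contra h
        push_neg at h
        have hc : ρ < limsup (fun n => ‖T^[n] q₀ - T^[m] w‖) atTop / (2 * β m) := by
          rw [← hρeq]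
          exact div_pos h (mul_pos two_pos (hβpos m))
        have h4 := stepA m _ hc
        have hβ := (hβpos m).ne'
        have h5 : β m * (limsup (fun n => ‖T^[n] q₀ - T^[m] w‖) atTop / (2 * β m)) =
            limsup (fun n => ‖T^[n] q₀ - T^[m] w‖) atTop / 2 := by
          field_simp
        rw [h5] at h4
        linarith
      have htend : Tendsto (fun n => ‖T^[n] q₀ - T^[m] w‖) atTop (nhds 0) :=
        tendsto_of_le_liminf_of_limsup_le hge hle (hbdd _ (wQ m))
          (isBoundedUnder_of ⟨0, fun n => norm_nonneg _⟩)
      exact tendsto_iff_norm_sub_tendsto_zero.2 htend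
    have heq : ∀ m, T^[m] w = w := by
      intro m
      have h0 := hconst 0
      simp only [Function.iterate_zero_apply] at h0
      exact tendsto_nhds_unique (hconst m) h0
    have : (fun n => T^[n] w) = fun _ => w := funext heq
    rw [this]
    exact cauchySeq_const w
  · -- Case ρ > 0 : uniform convexity argument
    rw [Metric.cauchySeq_iff]
    intro ε hε
    have hε₁ : 0 < ε * ρ / (ρ + 1) := by positivity
    obtain ⟨δ, hδ, hconv⟩ := exists_forall_closed_ball_dist_add_le_two_mul_sub U hε₁ ρ
    set η := min 1 (δ / 4) with hηdef
    have hηpos : 0 < η := lt_min one_pos (by linarith)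
    have hη1 : η ≤ 1 := min_le_left _ _
    have hηδ : η ≤ δ / 4 := min_le_right _ _
    set R := ρ + η with hRdef
    have hR : 0 < R := by positivity
    have hRρ : ρ < R := by simp only [hRdef]; linarith
    have hRρ1 : R ≤ ρ + 1 := by simp only [hRdef]; linarith
    have hc : ρ < ρ + η / 2 := by linarith
    have hNev : ∀ᶠ m in atTop, β m * (ρ + η / 2) < R := by
      have ht : Tendsto (fun m => β m * (ρ + η / 2)) atTop (nhds (1 * (ρ + η / 2))) :=
        hβlim.mul_const _
      rw [one_mul] at ht
      exact ht.eventually_lt_const (by simp only [hRdef]; linarith)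
    obtain ⟨N, hN⟩ := eventually_atTop.1 hNev
    refine ⟨N, fun m hm k hk => ?_⟩
    by_contra hcon
    push_neg at hcon
    rw [dist_eq_norm] at hcon
    have hlim : ∀ j, N ≤ j → limsup (fun n => ‖T^[n] q₀ - T^[j] w‖) atTop < R :=
      fun j hj => lt_of_le_of_lt (stepA j _ hc) (hN j hj)
    have hAm := eventually_lt_of_limsup_lt (hlim m hm) (hbdd _ (wQ m))
    have hAk := eventually_lt_of_limsup_lt (hlim k hk) (hbdd _ (wQ k))
    set z := (2⁻¹ : ℝ) • T^[m] w + (2⁻¹ : ℝ) • T^[k] w with hzdef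
    have hzQ : z ∈ Q := hQconv (wQ m) (wQ k) (by norm_num) (by norm_num) (by norm_num)
    have hev : ∀ᶠ n in atTop, ‖T^[n] q₀ - z‖ ≤ R - δ / 2 := by
      filter_upwards [hAm, hAk] with n ham hak
      set a := T^[n] q₀ - T^[m] w with hadef
      set b := T^[n] q₀ - T^[k] w with hbdef
      have hpos : 0 < ρ / R := div_pos hρpos hR
      have h1 : ‖(ρ / R) • a‖ ≤ ρ := by
        rw [norm_smul, Real.norm_eq_abs, abs_of_pos hpos]
        calc ρ / R * ‖a‖ ≤ ρ / R * R := by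
              exact mul_le_mul_of_nonneg_left ham.le hpos.le
          _ = ρ := div_mul_cancel₀ _ hR.ne'
      have h2 : ‖(ρ / R) • b‖ ≤ ρ := by
        rw [norm_smul, Real.norm_eq_abs, abs_of_pos hpos]
        calc ρ / R * ‖b‖ ≤ ρ / R * R := by
              exact mul_le_mul_of_nonneg_left hak.le hpos.le
          _ = ρ := div_mul_cancel₀ _ hR.ne'
      have hab : a - b = T^[k] w - T^[m] w := by
        simp only [hadef, hbdef]; abel
      have h3 : ε * ρ / (ρ + 1) ≤ ‖(ρ / R) • a - (ρ / R) • b‖ := by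
        rw [← smul_sub, norm_smul, Real.norm_eq_abs, abs_of_pos hpos, hab, norm_sub_rev]
        have h5 : ρ / (ρ + 1) ≤ ρ / R := by
          apply div_le_div_of_nonneg_left hρ0 hR hRρ1
        calc ε * ρ / (ρ + 1) = (ρ / (ρ + 1)) * ε := by ring
          _ ≤ (ρ / R) * ‖T^[m] w - T^[k] w‖ :=
              mul_le_mul h5 hcon hε.le (by positivity)
      have h6 := hconv h1 h2 h3
      rw [← smul_add, norm_smul, Real.norm_eq_abs, abs_of_pos hpos] at h6
      have h6' : ρ * ‖a + b‖ ≤ (2 * ρ - δ) * R := by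
        have h7 := mul_le_mul_of_nonneg_right h6 hR.le
        rwa [div_mul_eq_mul_div, div_mul_cancel₀ _ hR.ne'] at h7
      have h8 : ‖a + b‖ ≤ 2 * R - δ := by
        nlinarith [norm_nonneg (a + b), mul_le_mul_of_nonneg_left hRρ.le hδ.le]
      have h9 : T^[n] q₀ - z = (2⁻¹ : ℝ) • (a + b) := by
        simp only [hzdef, hadef, hbdef]
        module
      rw [h9, norm_smul, Real.norm_eq_abs]
      rw [show |(2⁻¹ : ℝ)| = 2⁻¹ by norm_num]
      linarith
    have hfinal : ρ ≤ R - δ / 2 :=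
      le_trans (hwmin z hzQ) (limsup_le_of_le (hcob _ fun n => norm_nonneg _) hev)
    simp only [hRdef] at hfinal
    linarith
end

section
/- Let Q be a nonempty weakly compact convex subset of a Banach space U and let T : Q → Q be a uniformly asymptotic local contraction with radius r > 0, coefficients (β_n) and limit β ∈ [0, 1). If there exists q₀ ∈ Q such that the asymptotic radius of the sequence (Tⁿq₀) relative to Q is strictly less than r, then T has a unique fixed point in Q. -/
open Filter

open NormedSpace

private lemma weak_t2 {U : Type*} [NormedAddCommGroup U] [NormedSpace ℝ U] :
    T2Space (WeakSpace ℝ U) := by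
  have hinj : Function.Injective ((topDualPairing ℝ U).flip) := by
    intro a b hab
    rw [eq_iff_forall_dual_eq ℝ]
    intro g
    exact congrArg (fun φ => φ g) hab
  exact (WeakBilin.isEmbedding hinj).t2Space

private lemma weak_closed {U : Type*} [NormedAddCommGroup U] [NormedSpace ℝ U]
    (Q : Set U) (hQwc : IsCompact (toWeakSpace ℝ U '' Q)) : IsClosed Q := by
  haveI := weak_t2 (U := U)
  have h1 : IsClosed (toWeakSpace ℝ U '' Q) := hQwc.isClosed
  have h2 : Q = toWeakSpaceCLM ℝ U ⁻¹' (toWeakSpace ℝ U '' Q) := by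
    ext p
    simp only [Set.mem_preimage]
    constructor
    · intro hp; exact ⟨p, hp, rfl⟩
    · rintro ⟨q, hq, hpq⟩
      rwa [show q = p from (toWeakSpace ℝ U).injective hpq] at hq
  rw [h2]
  exact h1.preimage (toWeakSpaceCLM ℝ U).continuous

private lemma weak_bounded {U : Type*} [NormedAddCommGroup U] [NormedSpace ℝ U] [CompleteSpace U]
    (Q : Set U) (hQwc : IsCompact (toWeakSpace ℝ U '' Q)) :
    ∃ M : ℝ, 0 ≤ M ∧ ∀ p ∈ Q, ‖p‖ ≤ M := by
  have h : ∀ f : StrongDual ℝ U, ∃ C, ∀ q : Q, ‖inclusionInDoubleDual ℝ U (q : U) f‖ ≤ C := by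
    intro f
    have hc : Continuous fun x : WeakSpace ℝ U => (topDualPairing ℝ U).flip x f :=
      WeakBilin.eval_continuous _ f
    have hcomp : IsCompact ((fun x : WeakSpace ℝ U => (topDualPairing ℝ U).flip x f) ''
        (toWeakSpace ℝ U '' Q)) := hQwc.image hc
    obtain ⟨C, hC⟩ := hcomp.isBounded.exists_norm_le
    refine ⟨C, fun q => ?_⟩
    exact hC _ ⟨toWeakSpace ℝ U q, ⟨q, q.2, rfl⟩, rfl⟩
  obtain ⟨C', hC'⟩ := banach_steinhaus (g := fun q : Q => inclusionInDoubleDual ℝ U (q : U))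
    (fun f => h f)
  refine ⟨max C' 0, le_max_right _ _, fun p hp => ?_⟩
  have := hC' ⟨p, hp⟩
  rw [show ‖inclusionInDoubleDual ℝ U p‖ = ‖p‖ from (inclusionInDoubleDualLi ℝ).norm_map p] at this
  exact le_max_of_le_left this

set_option maxHeartbeats 1000000 in
private theorem main_aux
    {U : Type*} [NormedAddCommGroup U] [NormedSpace ℝ U] [CompleteSpace U]
    (Q : Set U) (hQne : Q.Nonempty) (hQconv : Convex ℝ Q)
    (hQclosed : IsClosed Q) (M : ℝ) (hM0 : 0 ≤ M) (hM : ∀ p ∈ Q, ‖p‖ ≤ M)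
    (T : U → U) (hT : Set.MapsTo T Q Q)
    (r : ℝ) (hr : 0 < r)
    (β : ℝ) (hβ0 : 0 ≤ β) (hβ1 : β < 1)
    (βseq : ℕ → ℝ) (hβpos : ∀ n, 0 < βseq n)
    (hβlim : Tendsto βseq atTop (nhds β))
    (hTloc : ∀ p ∈ Q, ∀ q ∈ Q, ‖p - q‖ < r →
      ∀ n : ℕ, 1 ≤ n → ‖T^[n] p - T^[n] q‖ ≤ βseq n * ‖p - q‖)
    (q₀ : U) (hq₀ : q₀ ∈ Q)
    (hrad : asymptoticRadius Q (fun n => T^[n] q₀) < r) :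
    ∃! w, w ∈ Q ∧ T w = w := by
  set x : ℕ → U := fun n => T^[n] q₀ with hx
  have hxQ : ∀ n, x n ∈ Q := fun n => hT.iterate n hq₀
  -- boundedness facts
  have hbdd : ∀ p : U, IsBoundedUnder (· ≤ ·) atTop (fun n => ‖x n - p‖) := by
    intro p
    refine isBoundedUnder_of ⟨M + ‖p‖, fun n => ?_⟩
    calc ‖x n - p‖ ≤ ‖x n‖ + ‖p‖ := norm_sub_le _ _
      _ ≤ M + ‖p‖ := by have := hM _ (hxQ n); linarith
  have hcob : ∀ p : U, IsCoboundedUnder (· ≤ ·) atTop (fun n => ‖x n - p‖) :=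
    fun p => isCoboundedUnder_le_of_le atTop (fun n => norm_nonneg _)
  have hLnn : ∀ p : U, 0 ≤ limsup (fun n => ‖x n - p‖) atTop := fun p =>
    le_limsup_of_frequently_le (Frequently.of_forall fun n => norm_nonneg _) (hbdd p)
  -- a point with small asymptotic radius
  obtain ⟨Ly, ⟨y, hyQ, hyL⟩, hLy⟩ :
      ∃ Ly ∈ (fun y => limsup (fun n => ‖x n - y‖) atTop) '' Q, Ly < r :=
    exists_lt_of_csInf_lt (hQne.image _) hrad
  subst hyL
  set L0 := limsup (fun n => ‖x n - y‖) atTop with hL0def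
  -- choose k with βseq m ≤ β' for m ≥ k
  set β' : ℝ := (β + 1) / 2 with hβ'def
  have hβ'0 : 0 < β' := by positivity
  have hβ'1 : β' < 1 := by simp only [hβ'def]; linarith
  have hββ' : β < β' := by simp only [hβ'def]; linarith
  obtain ⟨k₀, hk₀⟩ := (hβlim.eventually (eventually_lt_nhds hββ')).exists_forall_of_atTop
  set k := max k₀ 1 with hkdef
  have hk1 : 1 ≤ k := le_max_right _ _
  have hkβ : βseq k ≤ β' := (hk₀ k (le_max_left _ _)).le
  -- key contraction step for limsups
  have key : ∀ p ∈ Q, limsup (fun n => ‖x n - p‖) atTop < r →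
      limsup (fun n => ‖x n - T^[k] p‖) atTop ≤ β' * limsup (fun n => ‖x n - p‖) atTop := by
    intro p hpQ hpr
    set L := limsup (fun n => ‖x n - p‖) atTop with hLdef
    have hstep : ∀ ε > 0, limsup (fun n => ‖x n - T^[k] p‖) atTop ≤ β' * (L + ε) := by
      intro ε hε
      have h1 : ∀ᶠ n in atTop, ‖x n - p‖ < L + ε :=
        eventually_lt_of_limsup_lt (by linarith) (hbdd p)
      have h2 : ∀ᶠ n in atTop, ‖x n - p‖ < r :=
        eventually_lt_of_limsup_lt hpr (hbdd p)
      have h3 : ∀ᶠ n in atTop, ‖x (n + k) - T^[k] p‖ ≤ β' * (L + ε) := by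
        filter_upwards [h1, h2] with n hn1 hn2
        have hxk : x (n + k) = T^[k] (x n) := by
          simp only [hx]
          rw [Nat.add_comm, Function.iterate_add_apply]
        rw [hxk]
        calc ‖T^[k] (x n) - T^[k] p‖ ≤ βseq k * ‖x n - p‖ :=
              hTloc _ (hxQ n) _ hpQ hn2 k hk1
          _ ≤ β' * (L + ε) := by
              have h0 : (0:ℝ) ≤ ‖x n - p‖ := norm_nonneg _
              nlinarith [(hβpos k).le, hβ'0.le]
      calc limsup (fun n => ‖x n - T^[k] p‖) atTop
          = limsup (fun n => ‖x (n + k) - T^[k] p‖) atTop :=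
            (limsup_nat_add (fun n => ‖x n - T^[k] p‖) k).symm
        _ ≤ β' * (L + ε) := limsup_le_of_le
            (isCoboundedUnder_le_of_le atTop (fun n => norm_nonneg _)) h3
    refine le_of_forall_pos_le_add fun δ hδ => ?_
    have := hstep (δ / β') (by positivity)
    calc limsup (fun n => ‖x n - T^[k] p‖) atTop ≤ β' * (L + δ / β') := this
      _ = β' * L + δ := by rw [mul_add, mul_div_cancel₀ _ hβ'0.ne']
  -- the iterated sequence z
  set S : U → U := T^[k] with hSdef
  have hSQ : Set.MapsTo S Q Q := hT.iterate k
  set z : ℕ → U := fun j => S^[j] y with hzdef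
  have hzsucc : ∀ j, z (j + 1) = S (z j) := fun j => Function.iterate_succ_apply' S j y
  have hzQ : ∀ j, z j ∈ Q := fun j => hSQ.iterate j hyQ
  have hzL : ∀ j, limsup (fun n => ‖x n - z j‖) atTop ≤ β' ^ j * L0 := by
    intro j
    induction j with
    | zero => simp [hzdef]; exact le_rfl
    | succ j ih =>
      have hjr : limsup (fun n => ‖x n - z j‖) atTop < r := by
        have h1 : β' ^ j ≤ 1 := pow_le_one₀ hβ'0.le hβ'1.le
        have h2 : β' ^ j * L0 ≤ L0 := by nlinarith [hLnn y]
        calc limsup (fun n => ‖x n - z j‖) atTop ≤ β' ^ j * L0 := ih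
          _ ≤ L0 := h2
          _ < r := hLy
      rw [hzsucc j]
      calc limsup (fun n => ‖x n - S (z j)‖) atTop
          ≤ β' * limsup (fun n => ‖x n - z j‖) atTop := key _ (hzQ j) hjr
        _ ≤ β' * (β' ^ j * L0) := by nlinarith [hβ'0.le]
        _ = β' ^ (j + 1) * L0 := by ring
  have hzLr : ∀ j, limsup (fun n => ‖x n - z j‖) atTop < r := by
    intro j
    have h1 : β' ^ j ≤ 1 := pow_le_one₀ hβ'0.le hβ'1.le
    have h2 : β' ^ j * L0 ≤ L0 := by nlinarith [hLnn y]
    calc limsup (fun n => ‖x n - z j‖) atTop ≤ β' ^ j * L0 := hzL j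
      _ ≤ L0 := h2
      _ < r := hLy
  -- z is Cauchy
  have hzdist : ∀ j, dist (z j) (z (j + 1)) ≤ 2 * L0 * β' ^ j := by
    intro j
    rw [dist_eq_norm]
    have hzz : ‖z j - z (j + 1)‖ ≤
        limsup (fun n => ‖x n - z j‖) atTop + limsup (fun n => ‖x n - z (j+1)‖) atTop := by
      refine le_of_forall_pos_le_add fun δ hδ => ?_
      have h1 : ∀ᶠ n in atTop, ‖x n - z j‖ <
          limsup (fun n => ‖x n - z j‖) atTop + δ / 2 :=
        eventually_lt_of_limsup_lt (by linarith) (hbdd _)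
      have h2 : ∀ᶠ n in atTop, ‖x n - z (j+1)‖ <
          limsup (fun n => ‖x n - z (j+1)‖) atTop + δ / 2 :=
        eventually_lt_of_limsup_lt (by linarith) (hbdd _)
      obtain ⟨n, hn1, hn2⟩ := (h1.and h2).exists
      calc ‖z j - z (j + 1)‖ = ‖(x n - z (j+1)) - (x n - z j)‖ := by
            congr 1; abel
        _ ≤ ‖x n - z (j+1)‖ + ‖x n - z j‖ := norm_sub_le _ _
        _ ≤ _ := by linarith
    have hb1 := hzL j
    have hb2 := hzL (j + 1)
    have h1 : β' ^ (j+1) * L0 ≤ β' ^ j * L0 := by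
      have : β' ^ (j+1) ≤ β' ^ j := pow_le_pow_of_le_one hβ'0.le hβ'1.le (by omega)
      nlinarith [hLnn y]
    calc ‖z j - z (j + 1)‖ ≤ _ := hzz
      _ ≤ β' ^ j * L0 + β' ^ j * L0 := by linarith
      _ = 2 * L0 * β' ^ j := by ring
  have hzCauchy : CauchySeq z := cauchySeq_of_le_geometric β' (2 * L0) hβ'1 hzdist
  obtain ⟨w, hw⟩ := cauchySeq_tendsto_of_complete hzCauchy
  have hwQ : w ∈ Q := hQclosed.mem_of_tendsto hw (Eventually.of_forall hzQ)
  -- x tends to w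
  have hL0nn : 0 ≤ L0 := hLnn y
  have hgeo : Tendsto (fun j => β' ^ j * L0) atTop (nhds 0) := by
    have := (tendsto_pow_atTop_nhds_zero_of_lt_one hβ'0.le hβ'1).mul_const L0
    simpa using this
  have hxw : Tendsto x atTop (nhds w) := by
    rw [Metric.tendsto_atTop]
    intro ε hε
    have h1 : ∀ᶠ j in atTop, β' ^ j * L0 < ε / 3 :=
      hgeo.eventually_lt_const (by linarith)
    have h2 : ∀ᶠ j in atTop, dist (z j) w < ε / 3 :=
      hw.eventually (Metric.ball_mem_nhds w (by linarith : (0:ℝ) < ε / 3))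
    obtain ⟨j, hj1, hj2⟩ := (h1.and h2).exists
    have h3 : ∀ᶠ n in atTop, ‖x n - z j‖ < ε / 3 + ε / 3 := by
      refine eventually_lt_of_limsup_lt ?_ (hbdd _)
      calc limsup (fun n => ‖x n - z j‖) atTop ≤ β' ^ j * L0 := hzL j
        _ < ε / 3 := hj1
        _ < ε / 3 + ε / 3 := by linarith
    obtain ⟨N, hN⟩ := eventually_atTop.1 h3
    refine ⟨N, fun n hn => ?_⟩
    have := hN n hn
    calc dist (x n) w ≤ dist (x n) (z j) + dist (z j) w := dist_triangle _ _ _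
      _ < (ε / 3 + ε / 3) + ε / 3 := by
          rw [dist_eq_norm]; exact add_lt_add this hj2
      _ = ε := by ring
  -- w is a fixed point
  have hTw : T w = w := by
    have hnorm0 : Tendsto (fun n => ‖x n - w‖) atTop (nhds 0) :=
      tendsto_iff_norm_sub_tendsto_zero.1 hxw
    have hev : ∀ᶠ n in atTop, ‖T (x n) - T w‖ ≤ βseq 1 * ‖x n - w‖ := by
      have hevr : ∀ᶠ n in atTop, ‖x n - w‖ < r := hnorm0.eventually_lt_const hr
      filter_upwards [hevr] with n hn
      have := hTloc _ (hxQ n) _ hwQ hn 1 le_rfl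
      simpa using this
    have hTx : Tendsto (fun n => T (x n)) atTop (nhds (T w)) := by
      rw [tendsto_iff_norm_sub_tendsto_zero]
      refine squeeze_zero' (Eventually.of_forall fun n => norm_nonneg _) hev ?_
      have : Tendsto (fun n => βseq 1 * ‖x n - w‖) atTop (nhds (βseq 1 * 0)) :=
        tendsto_const_nhds.mul hnorm0
      rw [mul_zero] at this
      exact this
    have hTx' : Tendsto (fun n => x (n + 1)) atTop (nhds w) :=
      hxw.comp (tendsto_add_atTop_nat 1)
    have heq : (fun n => T (x n)) = fun n => x (n + 1) := by
      funext n
      simp only [hx]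
      exact (Function.iterate_succ_apply' T n q₀).symm
    rw [heq] at hTx
    exact tendsto_nhds_unique hTx hTx'
  refine ⟨w, ⟨hwQ, hTw⟩, ?_⟩
  -- uniqueness
  rintro w' ⟨hw'Q, hw'fix⟩
  set d : ℝ := ‖w' - w‖ with hddef
  have hd0 : 0 ≤ d := norm_nonneg _
  obtain ⟨m, hm⟩ := exists_nat_gt (d / r)
  have hm0 : 0 < (m : ℝ) := lt_of_le_of_lt (div_nonneg hd0 hr.le) hm
  have hdm : d / m < r := by
    rw [div_lt_iff₀ hm0]
    rw [div_lt_iff₀ hr] at hm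
    linarith [hm]
  set u : ℕ → U := fun i => w' + ((i : ℝ) / m) • (w - w') with hudef
  have hu0 : u 0 = w' := by simp [hudef]
  have hum : u m = w := by
    simp only [hudef]
    rw [div_self hm0.ne']
    simp
  have huQ : ∀ i : ℕ, i ≤ m → u i ∈ Q := by
    intro i hi
    have ht0 : (0:ℝ) ≤ (i : ℝ) / m := by positivity
    have ht1 : (i : ℝ) / m ≤ 1 := by
      rw [div_le_one hm0]
      exact_mod_cast hi
    have := hQconv hw'Q hwQ (by linarith : (0:ℝ) ≤ 1 - (i:ℝ)/m) ht0 (by ring)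
    convert this using 1
    simp only [hudef]
    module
  have hudiff : ∀ i : ℕ, ‖u i - u (i + 1)‖ = d / m := by
    intro i
    have huu : u i - u (i + 1) = -((1 : ℝ) / m) • (w - w') := by
      simp only [hudef]
      push_cast
      match_scalars
      ring
      ring
    rw [huu, norm_smul]
    simp only [norm_neg, Real.norm_eq_abs]
    rw [norm_sub_rev, abs_of_nonneg (by positivity : (0:ℝ) ≤ (1:ℝ)/m)]
    simp only [hddef]
    ring
  have hstep : ∀ n : ℕ, 1 ≤ n → d ≤ βseq n * d := by
    intro n hn
    have hfix1 : T^[n] w' = w' := Function.iterate_fixed hw'fix n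
    have hfix2 : T^[n] w = w := Function.iterate_fixed hTw n
    have htri : dist (T^[n] (u 0)) (T^[n] (u m)) ≤
        ∑ i ∈ Finset.range m, dist (T^[n] (u i)) (T^[n] (u (i + 1))) :=
      dist_le_range_sum_dist (fun i => T^[n] (u i)) m
    have hterm : ∀ i ∈ Finset.range m, dist (T^[n] (u i)) (T^[n] (u (i + 1))) ≤
        βseq n * (d / m) := by
      intro i hi
      rw [Finset.mem_range] at hi
      rw [dist_eq_norm]
      have h1 : ‖u i - u (i+1)‖ < r := by rw [hudiff i]; exact hdm
      calc ‖T^[n] (u i) - T^[n] (u (i+1))‖ ≤ βseq n * ‖u i - u (i+1)‖ :=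
            hTloc _ (huQ i (by omega)) _ (huQ (i+1) (by omega)) h1 n hn
        _ = βseq n * (d / m) := by rw [hudiff i]
    calc d = dist (T^[n] (u 0)) (T^[n] (u m)) := by
          rw [hu0, hum, hfix1, hfix2, dist_eq_norm]
      _ ≤ ∑ i ∈ Finset.range m, dist (T^[n] (u i)) (T^[n] (u (i + 1))) := htri
      _ ≤ ∑ i ∈ Finset.range m, βseq n * (d / m) := Finset.sum_le_sum hterm
      _ = m * (βseq n * (d / m)) := by
          rw [Finset.sum_const, Finset.card_range]; ring
      _ = βseq n * d := by field_simp
  have hdβ : d ≤ β * d := by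
    refine ge_of_tendsto (hβlim.mul_const d) ?_
    exact eventually_atTop.2 ⟨1, fun n hn => hstep n hn⟩
  have hdz : d = 0 := by nlinarith
  have := norm_eq_zero.1 (hddef ▸ hdz)
  exact sub_eq_zero.1 this

theorem unique_fixed_point_of_uniformly_asymptotic_local_contraction
    {U : Type*} [NormedAddCommGroup U] [NormedSpace ℝ U] [CompleteSpace U]
    (Q : Set U) (hQne : Q.Nonempty) (hQconv : Convex ℝ Q)
    (hQwc : IsCompact (toWeakSpace ℝ U '' Q))
    (T : U → U) (hT : Set.MapsTo T Q Q)
    (r : ℝ) (hr : 0 < r)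
    (β : ℝ) (hβ0 : 0 ≤ β) (hβ1 : β < 1)
    (βseq : ℕ → ℝ) (hβpos : ∀ n, 0 < βseq n)
    (hβlim : Tendsto βseq atTop (nhds β))
    (hTloc : ∀ p ∈ Q, ∀ q ∈ Q, ‖p - q‖ < r →
      ∀ n : ℕ, 1 ≤ n → ‖T^[n] p - T^[n] q‖ ≤ βseq n * ‖p - q‖)
    (q₀ : U) (hq₀ : q₀ ∈ Q)
    (hrad : asymptoticRadius Q (fun n => T^[n] q₀) < r) :
    ∃! w, w ∈ Q ∧ T w = w := by
  obtain ⟨M, hM0, hM⟩ := weak_bounded Q hQwc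
  exact main_aux Q hQne hQconv (weak_closed Q hQwc) M hM0 hM T hT r hr β hβ0 hβ1
    βseq hβpos hβlim hTloc q₀ hq₀ hrad
end

section
/- Let Q be a nonempty weakly compact convex subset of a Banach space U and let T : Q → Q be a uniformly asymptotic local contraction with radius r > 0, coefficients (β_n) and limit β ∈ [0, 1). If q₀ ∈ Q is such that the asymptotic radius of (Tⁿq₀) relative to Q is strictly less than r, then the sequence (Tⁿq₀) converges in norm to a fixed point w of T; moreover limsup_{n→∞} ‖Tⁿq₀ − w‖ = 0. -/
open Filter

theorem iterates_converge_to_fixed_point_of_uniformly_asymptotic_local_contraction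
    {U : Type*} [NormedAddCommGroup U] [NormedSpace ℝ U] [CompleteSpace U]
    (Q : Set U) (hQne : Q.Nonempty) (hQconv : Convex ℝ Q)
    (hQwc : IsCompact (toWeakSpace ℝ U '' Q))
    (T : U → U) (hT : Set.MapsTo T Q Q)
    (r : ℝ) (hr : 0 < r)
    (β : ℝ) (hβ0 : 0 ≤ β) (hβ1 : β < 1)
    (βseq : ℕ → ℝ) (hβpos : ∀ n, 0 < βseq n)
    (hβlim : Tendsto βseq atTop (nhds β))
    (hTloc : ∀ p ∈ Q, ∀ q ∈ Q, ‖p - q‖ < r →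
      ∀ n : ℕ, 1 ≤ n → ‖T^[n] p - T^[n] q‖ ≤ βseq n * ‖p - q‖)
    (q₀ : U) (hq₀ : q₀ ∈ Q)
    (hrad : asymptoticRadius Q (fun n => T^[n] q₀) < r) :
    ∃ w ∈ Q, T w = w ∧ Tendsto (fun n => T^[n] q₀) atTop (nhds w) ∧
      limsup (fun n => ‖T^[n] q₀ - w‖) atTop = 0 := by
  classical
  set x : ℕ → U := fun n => T^[n] q₀ with hxdef
  have hxQ : ∀ n, x n ∈ Q := fun n => Set.MapsTo.iterate hT n hq₀
  -- Q is norm-bounded (weakly compact sets are bounded, via Banach–Steinhaus)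
  have hQbdd : ∃ C, ∀ p ∈ Q, ‖p‖ ≤ C := by
    have hpt : ∀ f : StrongDual ℝ U, ∃ C, ∀ p ∈ Q, ‖f p‖ ≤ C := by
      intro f
      have hfc : Continuous fun z : WeakSpace ℝ U => f ((toWeakSpace ℝ U).symm z) :=
        WeakBilin.eval_continuous _ f
      have hcomp : IsCompact ((fun z : WeakSpace ℝ U => f ((toWeakSpace ℝ U).symm z)) ''
          (toWeakSpace ℝ U '' Q)) := hQwc.image hfc
      obtain ⟨C, hC⟩ := isBounded_iff_forall_norm_le.mp hcomp.isBounded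
      refine ⟨C, fun p hp => ?_⟩
      have : f ((toWeakSpace ℝ U).symm (toWeakSpace ℝ U p)) = f p := by
        rw [LinearEquiv.symm_apply_apply]
      calc ‖f p‖ = ‖f ((toWeakSpace ℝ U).symm (toWeakSpace ℝ U p))‖ := by rw [this]
        _ ≤ C := hC _ ⟨toWeakSpace ℝ U p, ⟨p, hp, rfl⟩, rfl⟩
    obtain ⟨C, hC⟩ := banach_steinhaus
      (g := fun p : Q => NormedSpace.inclusionInDoubleDual ℝ U (p : U))
      (fun f => by
        obtain ⟨C, hC⟩ := hpt f
        exact ⟨C, fun i => by simpa [NormedSpace.dual_def] using hC i i.2⟩)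
    refine ⟨max C 0, fun p hp => ?_⟩
    refine NormedSpace.norm_le_dual_bound ℝ p (le_max_right _ _) fun f => ?_
    calc ‖f p‖ = ‖NormedSpace.inclusionInDoubleDual ℝ U p f‖ := by
          rw [NormedSpace.dual_def]
      _ ≤ ‖NormedSpace.inclusionInDoubleDual ℝ U p‖ * ‖f‖ :=
          ContinuousLinearMap.le_opNorm _ _
      _ ≤ max C 0 * ‖f‖ := by
          gcongr
          exact le_max_of_le_left (hC ⟨p, hp⟩)
  obtain ⟨C, hC⟩ := hQbdd
  -- boundedness of the relevant real sequences
  have hbd : ∀ y' : U, IsBoundedUnder (· ≤ ·) atTop fun n => ‖x n - y'‖ := by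
    intro y'
    refine isBoundedUnder_of ⟨C + ‖y'‖, fun n => ?_⟩
    calc ‖x n - y'‖ ≤ ‖x n‖ + ‖y'‖ := norm_sub_le _ _
      _ ≤ C + ‖y'‖ := by gcongr; exact hC _ (hxQ n)
  -- Q is closed (weakly compact, Hausdorff weak topology, convexity)
  have hinj : Function.Injective ((topDualPairing ℝ U).flip) :=
    separatingDual_iff_injective.mp inferInstance
  have hT2 : T2Space (WeakSpace ℝ U) := (WeakBilin.isEmbedding hinj).t2Space
  have hQclosed : IsClosed Q := by
    have h1 : (toWeakSpace ℝ U) '' (closure Q) = closure (toWeakSpace ℝ U '' Q) :=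
      hQconv.toWeakSpace_closure ℝ
    have h2 : closure (toWeakSpace ℝ U '' Q) = toWeakSpace ℝ U '' Q :=
      hQwc.isClosed.closure_eq
    have h3 : (toWeakSpace ℝ U) '' (closure Q) = (toWeakSpace ℝ U) '' Q := h1.trans h2
    have h4 : closure Q = Q := (toWeakSpace ℝ U).injective.image_injective h3
    exact isClosed_of_closure_subset h4.subset
  -- pick y in Q with small asymptotic radius
  have hSne : ((fun y => limsup (fun n => ‖x n - y‖) atTop) '' Q).Nonempty := hQne.image _
  obtain ⟨L, ⟨y, hyQ, rfl⟩, hLr⟩ := exists_lt_of_csInf_lt hSne hrad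
  have hyQ' := hyQ
  set L := limsup (fun n => ‖x n - y‖) atTop with hLdef
  set r' : ℝ := (L + r) / 2 with hr'def
  have hLr' : L < r' := by rw [hr'def]; linarith
  have hr'r : r' < r := by rw [hr'def]; linarith
  have hev : ∀ᶠ n in atTop, ‖x n - y‖ < r' := eventually_lt_of_limsup_lt hLr' (hbd y)
  obtain ⟨N₁, hN₁⟩ := eventually_atTop.mp hev
  have hr'0 : 0 < r' := lt_of_le_of_lt (norm_nonneg _) (hN₁ N₁ le_rfl)
  -- choose K ≥ 1 with βseq K ≤ β' < 1
  set β' : ℝ := (β + 1) / 2 with hβ'def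
  have hβ'0 : 0 ≤ β' := by rw [hβ'def]; linarith
  have hβ'1 : β' < 1 := by rw [hβ'def]; linarith
  have hββ' : β < β' := by rw [hβ'def]; linarith
  obtain ⟨N₂, hN₂⟩ := eventually_atTop.mp (hβlim.eventually_lt_const hββ')
  set K : ℕ := max N₂ 1 with hKdef
  have hK1 : 1 ≤ K := le_max_right _ _
  have hβK : βseq K ≤ β' := (hN₂ K (le_max_left _ _)).le
  set z : ℕ → U := fun n => T^[n] y with hzdef
  have hzQ : ∀ n, z n ∈ Q := fun n => Set.MapsTo.iterate hT n hyQ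
  -- the key contraction estimate along blocks of length K
  have hind : ∀ j : ℕ, 1 ≤ j → ∀ m : ℕ, N₁ ≤ m →
      ‖x (m + j * K) - z (j * K)‖ ≤ β' ^ j * r' := by
    intro j hj
    induction j, hj using Nat.le_induction with
    | base =>
      intro m hm
      have hx' : x (m + 1 * K) = T^[K] (x m) := by
        simp only [hxdef, one_mul]
        rw [add_comm, Function.iterate_add_apply]
      have hz' : z (1 * K) = T^[K] y := by simp [hzdef]
      rw [hx', hz', pow_one]
      calc ‖T^[K] (x m) - T^[K] y‖ ≤ βseq K * ‖x m - y‖ :=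
            hTloc (x m) (hxQ m) y hyQ ((hN₁ m hm).trans hr'r) K hK1
        _ ≤ β' * r' := by
            apply mul_le_mul hβK (hN₁ m hm).le (norm_nonneg _) hβ'0
    | succ j hj ih =>
      intro m hm
      have hprev := ih m hm
      have hlt : ‖x (m + j * K) - z (j * K)‖ < r := by
        calc ‖x (m + j * K) - z (j * K)‖ ≤ β' ^ j * r' := hprev
          _ ≤ 1 * r' := by
              apply mul_le_mul_of_nonneg_right _ hr'0.le
              exact pow_le_one₀ hβ'0 hβ'1.le
          _ = r' := one_mul _
          _ < r := hr'r
      have hx' : x (m + (j + 1) * K) = T^[K] (x (m + j * K)) := by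
        simp only [hxdef]
        rw [← Function.iterate_add_apply]
        congr 1
        ring
      have hz' : z ((j + 1) * K) = T^[K] (z (j * K)) := by
        simp only [hzdef]
        rw [← Function.iterate_add_apply]
        congr 1
        ring
      rw [hx', hz']
      calc ‖T^[K] (x (m + j * K)) - T^[K] (z (j * K))‖
          ≤ βseq K * ‖x (m + j * K) - z (j * K)‖ :=
            hTloc _ (hxQ _) _ (hzQ _) hlt K hK1
        _ ≤ β' * (β' ^ j * r') := mul_le_mul hβK hprev (norm_nonneg _) hβ'0
        _ = β' ^ (j + 1) * r' := by ring
  -- Cauchy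
  have hcauchy : CauchySeq x := by
    rw [Metric.cauchySeq_iff]
    intro ε hε
    have htend : Tendsto (fun j : ℕ => β' ^ j * (2 * r')) atTop (nhds 0) := by
      simpa using (tendsto_pow_atTop_nhds_zero_of_lt_one hβ'0 hβ'1).mul_const (2 * r')
    have : ∀ᶠ j : ℕ in atTop, β' ^ j * (2 * r') < ε := htend.eventually_lt_const hε
    obtain ⟨j, hjε, hj1⟩ := (this.and (eventually_ge_atTop 1)).exists
    refine ⟨N₁ + j * K, fun a ha b hb => ?_⟩
    have hax : a = (a - j * K) + j * K := by omega
    have hbx : b = (b - j * K) + j * K := by omega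
    have ha' : N₁ ≤ a - j * K := by omega
    have hb' : N₁ ≤ b - j * K := by omega
    have h1 : ‖x a - z (j * K)‖ ≤ β' ^ j * r' := by
      rw [hax]; exact hind j hj1 _ ha'
    have h2 : ‖x b - z (j * K)‖ ≤ β' ^ j * r' := by
      rw [hbx]; exact hind j hj1 _ hb'
    calc dist (x a) (x b) ≤ dist (x a) (z (j * K)) + dist (z (j * K)) (x b) :=
          dist_triangle _ _ _
      _ = ‖x a - z (j * K)‖ + ‖x b - z (j * K)‖ := by
          rw [dist_eq_norm, dist_eq_norm, norm_sub_rev (z (j * K))]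
      _ ≤ β' ^ j * r' + β' ^ j * r' := add_le_add h1 h2
      _ = β' ^ j * (2 * r') := by ring
      _ < ε := hjε
  obtain ⟨w, hw⟩ := cauchySeq_tendsto_of_complete hcauchy
  have hwQ : w ∈ Q := hQclosed.mem_of_tendsto hw (Eventually.of_forall hxQ)
  have hnorm0 : Tendsto (fun n => ‖x n - w‖) atTop (nhds 0) :=
    tendsto_iff_norm_sub_tendsto_zero.mp hw
  have hTw : T w = w := by
    have h1 : Tendsto (fun n => x (n + 1)) atTop (nhds w) :=
      hw.comp (tendsto_add_atTop_nat 1)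
    have h2 : Tendsto (fun n => x (n + 1)) atTop (nhds (T w)) := by
      rw [tendsto_iff_norm_sub_tendsto_zero]
      have hevr : ∀ᶠ n in atTop, ‖x n - w‖ < r := hnorm0.eventually_lt_const hr
      refine squeeze_zero' (Eventually.of_forall fun n => norm_nonneg _)
        ?_ (by simpa using hnorm0.const_mul (βseq 1))
      filter_upwards [hevr] with n hn
      have h := hTloc (x n) (hxQ n) w hwQ hn 1 le_rfl
      have hx1 : T^[1] (x n) = x (n + 1) := by
        simp only [hxdef, Function.iterate_one]
        exact (Function.iterate_succ_apply' T n q₀).symm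
      rw [hx1, Function.iterate_one] at h
      exact h
    exact (tendsto_nhds_unique h2 h1)
  exact ⟨w, hwQ, hTw, hw, hnorm0.limsup_eq⟩
end

section
/- Let Q be a nonempty convex subset of a Banach space U and let T : Q → Q be a uniformly asymptotic local contraction with radius r > 0, coefficients (β_n) and limit β ∈ [0, 1). Then T has at most one fixed point: if u, v ∈ Q satisfy Tu = u and Tv = v, then u = v. -/
open Filter

theorem at_most_one_fixed_point_of_uniformly_asymptotic_local_contraction
    {U : Type*} [NormedAddCommGroup U] [NormedSpace ℝ U] [CompleteSpace U]
    (Q : Set U) (hQne : Q.Nonempty) (hQconv : Convex ℝ Q)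
    (T : U → U) (hT : Set.MapsTo T Q Q)
    (r : ℝ) (hr : 0 < r)
    (β : ℝ) (hβ0 : 0 ≤ β) (hβ1 : β < 1)
    (βseq : ℕ → ℝ) (hβpos : ∀ n, 0 < βseq n)
    (hβlim : Tendsto βseq atTop (nhds β))
    (hTloc : ∀ p ∈ Q, ∀ q ∈ Q, ‖p - q‖ < r →
      ∀ n : ℕ, 1 ≤ n → ‖T^[n] p - T^[n] q‖ ≤ βseq n * ‖p - q‖)
    (u : U) (hu : u ∈ Q) (hufix : T u = u)
    (v : U) (hv : v ∈ Q) (hvfix : T v = v) :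
    u = v := by
  by_contra hne
  set d : ℝ := ‖u - v‖ with hd
  have hd0 : 0 < d := by
    simpa [hd] using sub_ne_zero.mpr hne
  -- choose n ≥ 1 with βseq n < 1
  have hev : ∀ᶠ n in atTop, βseq n < 1 :=
    hβlim.eventually (Filter.Tendsto.eventually_lt_const hβ1 tendsto_id) |>.mono (fun n h => h)
  obtain ⟨n, hn1, hβn⟩ : ∃ n, 1 ≤ n ∧ βseq n < 1 := by
    obtain ⟨m, hm⟩ := (hev.and (eventually_ge_atTop 1)).exists
    exact ⟨m, hm.2, hm.1⟩
  -- choose N with d/N < r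
  obtain ⟨N, hN⟩ := exists_nat_gt (d / r)
  have hN0 : 0 < (N : ℝ) := lt_trans (div_pos hd0 hr) hN
  have hNr : d / N < r := by
    rw [div_lt_iff₀ hN0]
    calc d = (d / r) * r := by field_simp
    _ < N * r := by exact mul_lt_mul_of_pos_right hN hr
    _ = r * N := mul_comm _ _
  -- the chain
  set w : ℕ → U := fun i => u + ((i : ℝ) / N) • (v - u) with hw
  have hwQ : ∀ i ≤ N, w i ∈ Q := by
    intro i hi
    have ht0 : (0:ℝ) ≤ (i : ℝ) / N := div_nonneg (Nat.cast_nonneg i) hN0.le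
    have ht1 : (i : ℝ) / N ≤ 1 := by
      rw [div_le_one hN0]; exact_mod_cast hi
    have := hQconv hu hv (by linarith : (0:ℝ) ≤ 1 - (i : ℝ)/N) ht0 (by ring)
    convert this using 1
    simp only [hw]
    rw [smul_sub, sub_smul, one_smul]
    abel
  have hwstep : ∀ i, w (i+1) - w i = ((1:ℝ)/N) • (v - u) := by
    intro i
    simp only [hw, Nat.cast_add, Nat.cast_one]
    rw [add_div, add_smul]
    abel
  have hwnorm : ∀ i, ‖w (i+1) - w i‖ = d / N := by
    intro i
    rw [hwstep, norm_smul]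
    simp [hd, norm_sub_rev u v, abs_of_pos hN0, div_eq_mul_inv, mul_comm]
  have hw0 : w 0 = u := by simp [hw]
  have hwN : w N = v := by
    simp only [hw]
    rw [div_self hN0.ne', one_smul]; abel
  -- fixed point iterates
  have hufixn : T^[n] u = u := Function.iterate_fixed hufix n
  have hvfixn : T^[n] v = v := Function.iterate_fixed hvfix n
  -- telescoping
  have key : d ≤ βseq n * d := by
    have htel : v - u = ∑ i ∈ Finset.range N, (T^[n] (w (i+1)) - T^[n] (w i)) := by
      rw [Finset.sum_range_sub (fun i => T^[n] (w i)), hw0, hwN, hufixn, hvfixn]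
    calc d = ‖v - u‖ := (norm_sub_rev u v)
    _ = ‖∑ i ∈ Finset.range N, (T^[n] (w (i+1)) - T^[n] (w i))‖ := by rw [← htel]
    _ ≤ ∑ i ∈ Finset.range N, ‖T^[n] (w (i+1)) - T^[n] (w i)‖ := norm_sum_le _ _
    _ ≤ ∑ i ∈ Finset.range N, βseq n * (d / N) := by
        apply Finset.sum_le_sum
        intro i hi
        have hi' : i < N := Finset.mem_range.mp hi
        have h1 := hTloc (w (i+1)) (hwQ (i+1) hi') (w i) (hwQ i hi'.le)
          (by rw [hwnorm]; exact hNr) n hn1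
        rw [hwnorm] at h1
        exact h1
    _ = N * (βseq n * (d / N)) := by rw [Finset.sum_const, Finset.card_range, nsmul_eq_mul]
    _ = βseq n * d := by field_simp
  have : d < d := lt_of_le_of_lt key (by nlinarith [hβpos n])
  exact lt_irrefl d this
end

section
/- Let Q be a nonempty weakly compact convex subset of a Banach space U and let T : Q → Q be a map such that there are functions β_n : Q → (0, ∞) and β : Q → [0, 1) with β_n(p) → β(p) as n → ∞ for each p ∈ Q (pointwise on Q), and such that for all p, q ∈ Q with ‖p − q‖ < r (r > 0 fixed) and every n ≥ 1, ‖Tⁿp − Tⁿq‖ ≤ β_n(p) ‖p − q‖. If there exists q₀ ∈ Q such that the asymptotic radius of the sequence (Tⁿq₀) relative to Q is strictly less than r, then T has a unique fixed point in Q. -/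
open Filter

private lemma real_le_of_forall_pos {a b : ℝ} (h : ∀ ε : ℝ, 0 < ε → a ≤ b + ε) : a ≤ b := by
  by_contra hlt
  push_neg at hlt
  have := h ((a - b) / 2) (by linarith)
  linarith

theorem unique_fixed_point_of_uniformly_local_pointwise_asymptotic_contraction
    {U : Type*} [NormedAddCommGroup U] [NormedSpace ℝ U] [CompleteSpace U]
    (Q : Set U) (hQne : Q.Nonempty) (hQconv : Convex ℝ Q)
    (hQwc : IsCompact (toWeakSpace ℝ U '' Q))
    (T : U → U) (hT : Set.MapsTo T Q Q)
    (r : ℝ) (hr : 0 < r)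
    (βseq : ℕ → U → ℝ) (β : U → ℝ)
    (hβpos : ∀ n, ∀ p ∈ Q, 0 < βseq n p)
    (hβ0 : ∀ p ∈ Q, 0 ≤ β p) (hβ1 : ∀ p ∈ Q, β p < 1)
    (hβlim : ∀ p ∈ Q, Tendsto (fun n => βseq n p) atTop (nhds (β p)))
    (hTloc : ∀ p ∈ Q, ∀ q ∈ Q, ‖p - q‖ < r →
      ∀ n : ℕ, 1 ≤ n → ‖T^[n] p - T^[n] q‖ ≤ βseq n p * ‖p - q‖)
    (q₀ : U) (hq₀ : q₀ ∈ Q)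
    (hrad : asymptoticRadius Q (fun n => T^[n] q₀) < r) :
    ∃! w, w ∈ Q ∧ T w = w := by
  classical
  set x : ℕ → U := fun n => T^[n] q₀ with hxdef
  have hx : ∀ n, x n ∈ Q := fun n => hT.iterate n hq₀
  -- Step 1 : Q is norm-bounded (via Banach–Steinhaus)
  have hnorm : ∀ v : U, ‖NormedSpace.inclusionInDoubleDual ℝ U v‖ = ‖v‖ := fun v =>
    (NormedSpace.inclusionInDoubleDualLi ℝ (E := U)).norm_map v
  obtain ⟨C, hC⟩ : ∃ C : ℝ, ∀ q ∈ Q, ‖q‖ ≤ C := by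
    have hpt : ∀ φ : StrongDual ℝ U, ∃ M : ℝ,
        ∀ q : Q, ‖NormedSpace.inclusionInDoubleDual ℝ U (q : U) φ‖ ≤ M := by
      intro φ
      have hcont : Continuous fun z : WeakSpace ℝ U => φ ((toWeakSpace ℝ U).symm z) :=
        WeakBilin.eval_continuous (topDualPairing ℝ U).flip φ
      have hKc : IsCompact ((fun z : WeakSpace ℝ U => ‖φ ((toWeakSpace ℝ U).symm z)‖) ''
          (toWeakSpace ℝ U '' Q)) := hQwc.image (continuous_norm.comp hcont)
      obtain ⟨M, hM⟩ := hKc.bddAbove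
      refine ⟨M, fun q => ?_⟩
      have hmem : ‖φ (q : U)‖ ∈ (fun z : WeakSpace ℝ U => ‖φ ((toWeakSpace ℝ U).symm z)‖) ''
          (toWeakSpace ℝ U '' Q) := by
        refine ⟨toWeakSpace ℝ U (q : U), ⟨(q : U), q.2, rfl⟩, ?_⟩
        simp
      simpa [NormedSpace.dual_def] using hM hmem
    obtain ⟨C', hC'⟩ := banach_steinhaus
      (g := fun q : Q => NormedSpace.inclusionInDoubleDual ℝ U (q : U)) hpt
    exact ⟨C', fun q hq => (hnorm q) ▸ hC' ⟨q, hq⟩⟩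
  -- Step 2 : basic facts about ρ y = limsup ‖x n - y‖
  set ρ : U → ℝ := fun y => limsup (fun n => ‖x n - y‖) atTop with hρdef
  have hBdd : ∀ y : U, IsBoundedUnder (· ≤ ·) atTop fun n => ‖x n - y‖ := fun y =>
    isBoundedUnder_of ⟨C + ‖y‖, fun n =>
      (norm_sub_le _ _).trans (add_le_add_left (hC _ (hx n)) _)⟩
  have hCo : ∀ y : U, IsCoboundedUnder (· ≤ ·) atTop fun n => ‖x n - y‖ := fun y =>
    isCoboundedUnder_le_of_le atTop fun n => norm_nonneg _
  have hρ0 : ∀ y, 0 ≤ ρ y := fun y =>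
    le_limsup_of_frequently_le (Frequently.of_forall fun n => norm_nonneg _) (hBdd y)
  have hle : ∀ (y : U) (a : ℝ), (∀ᶠ n in atTop, ‖x n - y‖ ≤ a) → ρ y ≤ a := fun y a h =>
    limsup_le_of_le (hCo y) h
  have hev : ∀ (y : U) (b : ℝ), ρ y < b → ∀ᶠ n in atTop, ‖x n - y‖ < b := fun y b h =>
    eventually_lt_of_limsup_lt h (hBdd y)
  -- ρ is 1-Lipschitz
  have hlip : ∀ y z : U, ρ y ≤ ρ z + ‖y - z‖ := by
    intro y z
    refine real_le_of_forall_pos fun ε hε => ?_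
    have h1 := hev z (ρ z + ε) (by linarith)
    have h2 : ρ y ≤ ρ z + ε + ‖y - z‖ := by
      refine hle y _ (h1.mono fun n hn => ?_)
      calc ‖x n - y‖ = ‖(x n - z) + (z - y)‖ := by rw [sub_add_sub_cancel]
        _ ≤ ‖x n - z‖ + ‖z - y‖ := norm_add_le _ _
        _ ≤ (ρ z + ε) + ‖y - z‖ := by rw [norm_sub_rev z y]; exact add_le_add_left hn.le _
    linarith
  have hρcont : Continuous ρ := by
    have : LipschitzWith 1 ρ := by
      refine LipschitzWith.of_dist_le_mul fun y z => ?_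
      rw [Real.dist_eq, dist_eq_norm, NNReal.coe_one, one_mul, abs_sub_le_iff]
      constructor
      · linarith [hlip y z]
      · have := hlip z y
        rw [norm_sub_rev z y] at this
        linarith
    exact this.continuous
  -- ρ is convex
  have hρconv : ∀ (y z : U) (a b : ℝ), 0 ≤ a → 0 ≤ b → a + b = 1 →
      ρ (a • y + b • z) ≤ a * ρ y + b * ρ z := by
    intro y z a b ha hb hab
    refine real_le_of_forall_pos fun ε hε => ?_
    have h1 := hev y (ρ y + ε) (by linarith)
    have h2 := hev z (ρ z + ε) (by linarith)
    refine (hle _ (a * ρ y + b * ρ z + ε) (((h1.and h2)).mono fun n hn => ?_))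
    have hsplit : x n - (a • y + b • z) = a • (x n - y) + b • (x n - z) := by
      have hx' : a • x n + b • x n = x n := by rw [← add_smul, hab, one_smul]
      calc x n - (a • y + b • z) = (a • x n + b • x n) - (a • y + b • z) := by rw [hx']
        _ = a • (x n - y) + b • (x n - z) := by rw [smul_sub, smul_sub]; abel
    rw [hsplit]
    calc ‖a • (x n - y) + b • (x n - z)‖ ≤ a * ‖x n - y‖ + b * ‖x n - z‖ := by
          refine (norm_add_le _ _).trans ?_
          rw [norm_smul, norm_smul, Real.norm_of_nonneg ha, Real.norm_of_nonneg hb]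
      _ ≤ a * (ρ y + ε) + b * (ρ z + ε) :=
          add_le_add (mul_le_mul_of_nonneg_left hn.1.le ha)
            (mul_le_mul_of_nonneg_left hn.2.le hb)
      _ = a * ρ y + b * ρ z + ε := by linear_combination ε * hab
  -- Step 3 : the asymptotic radius, and a minimizing point w
  have hrad' : sInf (ρ '' Q) < r := hrad
  have himg_ne : (ρ '' Q).Nonempty := hQne.image _
  have hbb : BddBelow (ρ '' Q) := by
    refine ⟨0, ?_⟩
    rintro v ⟨y, hy, rfl⟩
    exact hρ0 y
  have hRle : ∀ y ∈ Q, sInf (ρ '' Q) ≤ ρ y := fun y hy => csInf_le hbb ⟨y, hy, rfl⟩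
  have hyk : ∀ k : ℕ, ∃ y ∈ Q, ρ y < sInf (ρ '' Q) + 1 / (k + 1) := by
    intro k
    have hlt : sInf (ρ '' Q) < sInf (ρ '' Q) + 1 / (k + 1) := by
      have : (0:ℝ) < 1 / ((k:ℝ) + 1) := by positivity
      linarith
    obtain ⟨v, ⟨y, hy, rfl⟩, hv⟩ := (csInf_lt_iff hbb himg_ne).mp hlt
    exact ⟨y, hy, hv⟩
  choose y hyQ hyρ using hyk
  set z : ℕ → WeakSpace ℝ U := fun k => toWeakSpace ℝ U (y k) with hzdef
  have hzK : ∀ k, z k ∈ toWeakSpace ℝ U '' Q := fun k => ⟨y k, hyQ k, rfl⟩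
  have hmap : Filter.map z atTop ≤ 𝓟 (toWeakSpace ℝ U '' Q) :=
    le_principal_iff.mpr (mem_map.mpr (Eventually.of_forall hzK))
  obtain ⟨zc, hzcK, hclus⟩ := hQwc.exists_clusterPt hmap
  obtain ⟨w, hwQ, hwz⟩ := hzcK
  have hwρ : ρ w ≤ sInf (ρ '' Q) := by
    refine real_le_of_forall_pos fun ε hε => ?_
    set V : Set U := {v | ρ v ≤ sInf (ρ '' Q) + ε} with hV
    have hVconv : Convex ℝ V := by
      intro p hp q hq a b ha hb hab
      have h1 := hρconv p q a b ha hb hab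
      have hp' : ρ p ≤ sInf (ρ '' Q) + ε := hp
      have hq' : ρ q ≤ sInf (ρ '' Q) + ε := hq
      have : a * ρ p + b * ρ q ≤ sInf (ρ '' Q) + ε := by
        calc a * ρ p + b * ρ q ≤ a * (sInf (ρ '' Q) + ε) + b * (sInf (ρ '' Q) + ε) :=
              add_le_add (mul_le_mul_of_nonneg_left hp' ha) (mul_le_mul_of_nonneg_left hq' hb)
          _ = sInf (ρ '' Q) + ε := by linear_combination (sInf (ρ '' Q) + ε) * hab
      exact h1.trans this
    have hVclosed : IsClosed V := isClosed_le hρcont continuous_const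
    have hWclosed : IsClosed (toWeakSpace ℝ U '' V) := by
      rw [← closure_eq_iff_isClosed, ← hVconv.toWeakSpace_closure ℝ, hVclosed.closure_eq]
    have hev' : ∀ᶠ k in atTop, z k ∈ toWeakSpace ℝ U '' V := by
      have hsmall : ∀ᶠ k : ℕ in atTop, 1 / ((k:ℝ) + 1) < ε :=
        tendsto_one_div_add_atTop_nhds_zero_nat.eventually_lt_const hε
      refine hsmall.mono fun k hk => ⟨y k, ?_, rfl⟩
      show ρ (y k) ≤ sInf (ρ '' Q) + ε
      linarith [hyρ k]
    have hzcW : zc ∈ toWeakSpace ℝ U '' V := by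
      have hcl : ClusterPt zc (𝓟 (toWeakSpace ℝ U '' V)) :=
        hclus.mono (le_principal_iff.mpr (mem_map.mpr hev'))
      have := mem_closure_iff_clusterPt.mpr hcl
      rwa [hWclosed.closure_eq] at this
    obtain ⟨v, hvV, hvz⟩ := hzcW
    have hvw : v = w := (toWeakSpace ℝ U).injective (hvz.trans hwz.symm)
    rw [hvw] at hvV
    exact hvV
  have hwr : ρ w < r := lt_of_le_of_lt hwρ hrad'
  -- Step 4 : key contraction estimate along the orbit
  have hkey : ∀ m : ℕ, 1 ≤ m → ∀ b : ℝ, ρ w < b → b < r → ρ (T^[m] w) ≤ βseq m w * b := by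
    intro m hm b hb hbr
    obtain ⟨N, hN⟩ := eventually_atTop.mp (hev w b hb)
    refine hle _ _ (eventually_atTop.mpr ⟨N + m, fun n hn => ?_⟩)
    have hn' : N ≤ n - m := by omega
    have hwxn : ‖w - x (n - m)‖ < b := by
      rw [norm_sub_rev]; exact hN _ hn'
    have hco : ‖w - x (n - m)‖ < r := hwxn.trans hbr
    have hTl := hTloc w hwQ (x (n - m)) (hx (n - m)) hco m hm
    have hxe : T^[m] (x (n - m)) = x n := by
      simp only [hxdef]
      rw [← Function.iterate_add_apply]
      congr 1
      omega
    rw [hxe] at hTl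
    rw [norm_sub_rev]
    exact hTl.trans (mul_le_mul_of_nonneg_left hwxn.le (hβpos m w hwQ).le)
  have hkey' : ∀ m : ℕ, 1 ≤ m → ρ (T^[m] w) ≤ βseq m w * ρ w := by
    intro m hm
    by_contra hcon
    push_neg at hcon
    have hβm := hβpos m w hwQ
    set g := ρ (T^[m] w) - βseq m w * ρ w with hg
    have hg0 : 0 < g := by rw [hg]; linarith
    have hden : (0:ℝ) < βseq m w + 1 := by linarith
    set δ := min ((r - ρ w) / 2) (g / (βseq m w + 1)) with hδ
    have hδ0 : 0 < δ := lt_min (by linarith) (by positivity)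
    have hb1 : ρ w < ρ w + δ := by linarith
    have hb2 : ρ w + δ < r := by
      have := min_le_left ((r - ρ w) / 2) (g / (βseq m w + 1))
      have hδle : δ ≤ (r - ρ w) / 2 := by rw [hδ]; exact this
      linarith
    have h := hkey m hm (ρ w + δ) hb1 hb2
    have hδle2 : δ ≤ g / (βseq m w + 1) := by rw [hδ]; exact min_le_right _ _
    have hstep : βseq m w * (ρ w + δ) ≤ βseq m w * ρ w + βseq m w * (g / (βseq m w + 1)) := by
      rw [mul_add]
      exact add_le_add_right (mul_le_mul_of_nonneg_left hδle2 hβm.le) _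
    have hfrac : βseq m w * (g / (βseq m w + 1)) < g := by
      have heq : βseq m w * (g / (βseq m w + 1)) = g * (βseq m w / (βseq m w + 1)) := by ring
      have hlt1 : βseq m w / (βseq m w + 1) < 1 := (div_lt_one hden).mpr (by linarith)
      rw [heq]
      calc g * (βseq m w / (βseq m w + 1)) < g * 1 := by
            exact mul_lt_mul_of_pos_left hlt1 hg0
        _ = g := mul_one g
    have : ρ (T^[m] w) < ρ (T^[m] w) := by
      calc ρ (T^[m] w) ≤ βseq m w * (ρ w + δ) := h
        _ ≤ βseq m w * ρ w + βseq m w * (g / (βseq m w + 1)) := hstep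
        _ < βseq m w * ρ w + g := by linarith
        _ = ρ (T^[m] w) := by rw [hg]; ring
    exact lt_irrefl _ this
  -- ρ w = 0
  have hρw0 : ρ w = 0 := by
    obtain ⟨m, hm1, hmlt⟩ : ∃ m : ℕ, 1 ≤ m ∧ βseq m w < 1 := by
      have hevβ : ∀ᶠ m in atTop, βseq m w < 1 :=
        (hβlim w hwQ).eventually_lt_const (hβ1 w hwQ)
      obtain ⟨m, hm⟩ := (hevβ.and (eventually_ge_atTop 1)).exists
      exact ⟨m, hm.2, hm.1⟩
    have h1 := hkey' m hm1
    have h2 := hRle _ (hT.iterate m hwQ)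
    rcases (hρ0 w).lt_or_eq with hpos | heq
    · exfalso
      have hchain : ρ w ≤ βseq m w * ρ w := le_trans (hwρ.trans h2) h1
      nlinarith
    · exact heq.symm
  have hconvlim : ∀ v : U, ρ v = 0 → Tendsto x atTop (nhds v) := by
    intro v hv
    rw [NormedAddCommGroup.tendsto_atTop]
    intro ε hε
    obtain ⟨N, hN⟩ := eventually_atTop.mp (hev v ε (by rw [hv]; exact hε))
    exact ⟨N, fun n hn => hN n hn⟩
  have hxw := hconvlim w hρw0
  have hTw0 : ρ (T w) = 0 := by
    have h1 := hkey' 1 le_rfl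
    rw [Function.iterate_one, hρw0, mul_zero] at h1
    exact le_antisymm h1 (hρ0 (T w))
  have hxTw := hconvlim _ hTw0
  have hfix : T w = w := tendsto_nhds_unique hxTw hxw
  -- Step 5 : uniqueness via a chain along the segment
  refine ⟨w, ⟨hwQ, hfix⟩, ?_⟩
  rintro u ⟨huQ, hufix⟩
  by_contra hne
  have hd : 0 < ‖u - w‖ := by
    rw [norm_pos_iff, sub_ne_zero]
    exact hne
  set d := ‖u - w‖ with hddef
  obtain ⟨k, hk1, hdk⟩ : ∃ k : ℕ, 1 ≤ k ∧ d / k < r := by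
    obtain ⟨k, hk⟩ := exists_nat_gt (d / r)
    refine ⟨k + 1, Nat.le_add_left 1 k, ?_⟩
    have hk' : d / r < ((k + 1 : ℕ) : ℝ) := by push_cast; linarith
    have hkpos : (0:ℝ) < ((k + 1 : ℕ) : ℝ) := by positivity
    rw [div_lt_iff₀ hkpos]
    have h2 := (div_lt_iff₀ hr).mp hk'
    rw [mul_comm] at h2
    linarith
  have hkpos : (0:ℝ) < (k:ℝ) := by exact_mod_cast hk1
  set zz : ℕ → U := fun i => u + ((i : ℝ) / k) • (w - u) with hzz
  have hz0 : zz 0 = u := by simp [hzz]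
  have hzk : zz k = w := by
    simp only [hzz, div_self hkpos.ne']
    rw [one_smul]
    abel
  have hzQ : ∀ i ≤ k, zz i ∈ Q := by
    intro i hi
    have h0 : (0:ℝ) ≤ (i:ℝ) / k := by positivity
    have h1 : (i:ℝ) / k ≤ 1 := by
      rw [div_le_one hkpos]
      exact_mod_cast hi
    have hmem := hQconv huQ hwQ (by linarith : (0:ℝ) ≤ 1 - (i:ℝ)/k) h0 (by ring)
    have heq : (1 - (i:ℝ)/k) • u + ((i:ℝ)/k) • w = zz i := by
      simp only [hzz]
      module
    rwa [heq] at hmem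
  have hstep : ∀ i : ℕ, zz (i+1) - zz i = ((1:ℝ)/k) • (w - u) := by
    intro i
    simp only [hzz]
    push_cast
    module
  have hdist : ∀ i : ℕ, ‖zz i - zz (i+1)‖ = d / k := by
    intro i
    rw [norm_sub_rev, hstep, norm_smul, Real.norm_eq_abs,
      abs_of_nonneg (by positivity : (0:ℝ) ≤ 1/(k:ℝ)), norm_sub_rev w u, ← hddef]
    ring
  have hsum : ∀ n : ℕ, 1 ≤ n → d ≤ (∑ i ∈ Finset.range k, βseq n (zz i)) * (d / k) := by
    intro n hn
    have htel : d ≤ ∑ i ∈ Finset.range k, ‖T^[n] (zz i) - T^[n] (zz (i+1))‖ := by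
      have hdle := dist_le_range_sum_dist (fun i => T^[n] (zz i)) k
      simp only [dist_eq_norm] at hdle
      have h0 : T^[n] (zz 0) = u := by rw [hz0, Function.iterate_fixed hufix]
      have h1 : T^[n] (zz k) = w := by rw [hzk, Function.iterate_fixed hfix]
      rw [h0, h1] at hdle
      exact hdle
    refine htel.trans ?_
    rw [Finset.sum_mul]
    refine Finset.sum_le_sum fun i hi => ?_
    have hik := Finset.mem_range.mp hi
    have hiQ := hzQ i hik.le
    have hi1Q := hzQ (i+1) hik
    have hlt : ‖zz i - zz (i+1)‖ < r := by rw [hdist i]; exact hdk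
    have := hTloc (zz i) hiQ (zz (i+1)) hi1Q hlt n hn
    rwa [hdist i] at this
  have hB : Tendsto (fun n => ∑ i ∈ Finset.range k, βseq n (zz i)) atTop
      (nhds (∑ i ∈ Finset.range k, β (zz i))) :=
    tendsto_finset_sum _ fun i hi => hβlim _ (hzQ i (Finset.mem_range.mp hi).le)
  have hSlt : (∑ i ∈ Finset.range k, β (zz i)) < k := by
    have hne' : (Finset.range k).Nonempty := Finset.nonempty_range_iff.mpr (by omega)
    calc (∑ i ∈ Finset.range k, β (zz i)) < ∑ _i ∈ Finset.range k, (1:ℝ) :=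
          Finset.sum_lt_sum_of_nonempty hne' fun i hi =>
            hβ1 _ (hzQ i (Finset.mem_range.mp hi).le)
      _ = k := by simp
  have hfinal : d ≤ (∑ i ∈ Finset.range k, β (zz i)) * (d / k) := by
    refine ge_of_tendsto (hB.mul_const (d / k)) ?_
    exact eventually_atTop.mpr ⟨1, fun n hn => hsum n hn⟩
  have hlast : (∑ i ∈ Finset.range k, β (zz i)) * (d / k) < (k:ℝ) * (d / k) :=
    mul_lt_mul_of_pos_right hSlt (by positivity)
  have hkd : (k:ℝ) * (d / k) = d := by field_simp
  linarith
end
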